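/- arXiv:2107.08071 — 5 statements merged into one kernel-verified Lean document; each statement's English description precedes it below -/
import Mathlib

section
/- For every n ≥ 1, the permutation graph G_{p_{2n}} of the permutation p_{2n} is isomorphic to the fork graph F_{2n}. In particular, every fork graph F_{2n} on an even-length path is a permutation graph. -/
/-- The permutation graph of `σ`: vertices `i < j` are adjacent iff `σ i > σ j`. -/
def permGraph {n : ℕ} (σ : Equiv.Perm (Fin n)) : SimpleGraph (Fin n) :=
  SimpleGraph.fromRel (fun i j => i < j ∧ σ j < σ i)


/-- The fork graph `F k`: a path on `k` vertices (labelled `2, …, k+1`) with two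
extra leaves (`0` and `1`) adjacent to the first path vertex and two extra
leaves (`k+2` and `k+3`) adjacent to the last path vertex. -/
def forkGraph (k : ℕ) : SimpleGraph (Fin (k + 4)) :=
  SimpleGraph.fromRel (fun i j =>
    ((i : ℕ) = 0 ∧ (j : ℕ) = 2) ∨
    ((i : ℕ) = 1 ∧ (j : ℕ) = 2) ∨
    (2 ≤ (i : ℕ) ∧ (j : ℕ) = (i : ℕ) + 1 ∧ (j : ℕ) ≤ k + 1) ∨
    ((i : ℕ) = k + 1 ∧ (j : ℕ) = k + 2) ∨
    ((i : ℕ) = k + 1 ∧ (j : ℕ) = k + 3))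

/-- The one-line values (0-based positions and values) of the permutation `p_{2n}`
of `{1,…,2n+4}` given in 1-based one-line notation by `p(1)=4, p(2)=1, p(3)=2`,
`p(2k)=2k+2` and `p(2k+1)=2k−1` for `2 ≤ k ≤ n`, `p(2n+2)=2n+3`, `p(2n+3)=2n+4`,
`p(2n+4)=2n+1` (e.g. `p_2 = 412563`, `p_4 = 41263785`). -/
def pVal (n i : ℕ) : ℕ :=
  if i = 0 then 3
  else if i = 1 then 0
  else if i = 2 then 1
  else if i = 2 * n + 1 then 2 * n + 2
  else if i = 2 * n + 2 then 2 * n + 3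
  else if i = 2 * n + 3 then 2 * n
  else if i % 2 = 1 then i + 2
  else i - 2

def fNat (n j : ℕ) : ℕ :=
  if j = 0 then 1
  else if j = 1 then 2
  else if j = 2 then 0
  else if j = 2 * n + 1 then 2 * n + 3
  else if j = 2 * n + 2 then 2 * n + 1
  else if j = 2 * n + 3 then 2 * n + 2
  else if j % 2 = 1 then j + 1
  else j - 1

def gNat (n j : ℕ) : ℕ :=
  if j = 1 then 0
  else if j = 2 then 1
  else if j = 0 then 2
  else if j = 2 * n + 3 then 2 * n + 1
  else if j = 2 * n + 1 then 2 * n + 2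
  else if j = 2 * n + 2 then 2 * n + 3
  else if j % 2 = 1 then j + 1
  else j - 1

lemma fNat_rel (n : ℕ) (hn : 1 ≤ n) {j : ℕ} (hj : j < 2 * n + 4) :
    (j = 0 ∧ fNat n j = 1) ∨ (j = 1 ∧ fNat n j = 2) ∨ (j = 2 ∧ fNat n j = 0) ∨
    (j = 2*n+1 ∧ fNat n j = 2*n+3) ∨ (j = 2*n+2 ∧ fNat n j = 2*n+1) ∨
    (j = 2*n+3 ∧ fNat n j = 2*n+2) ∨
    (3 ≤ j ∧ j ≤ 2*n ∧ j % 2 = 1 ∧ fNat n j = j+1) ∨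
    (4 ≤ j ∧ j ≤ 2*n ∧ j % 2 = 0 ∧ fNat n j = j-1) := by
  obtain ⟨x, hx⟩ : ∃ x, fNat n j = x := ⟨_, rfl⟩
  rw [hx]
  unfold fNat at hx
  split_ifs at hx
  · exact Or.inl ⟨by omega, by omega⟩
  · exact Or.inr (Or.inl ⟨by omega, by omega⟩)
  · exact Or.inr (Or.inr (Or.inl ⟨by omega, by omega⟩))
  · exact Or.inr (Or.inr (Or.inr (Or.inl ⟨by omega, by omega⟩)))
  · exact Or.inr (Or.inr (Or.inr (Or.inr (Or.inl ⟨by omega, by omega⟩))))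
  · exact Or.inr (Or.inr (Or.inr (Or.inr (Or.inr (Or.inl ⟨by omega, by omega⟩)))))
  · exact Or.inr (Or.inr (Or.inr (Or.inr (Or.inr (Or.inr (Or.inl ⟨by omega, by omega, by omega, by omega⟩))))))
  · exact Or.inr (Or.inr (Or.inr (Or.inr (Or.inr (Or.inr (Or.inr ⟨by omega, by omega, by omega, by omega⟩))))))

lemma gNat_rel (n : ℕ) (hn : 1 ≤ n) {j : ℕ} (hj : j < 2 * n + 4) :
    (j = 1 ∧ gNat n j = 0) ∨ (j = 2 ∧ gNat n j = 1) ∨ (j = 0 ∧ gNat n j = 2) ∨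
    (j = 2*n+3 ∧ gNat n j = 2*n+1) ∨ (j = 2*n+1 ∧ gNat n j = 2*n+2) ∨
    (j = 2*n+2 ∧ gNat n j = 2*n+3) ∨
    (3 ≤ j ∧ j ≤ 2*n ∧ j % 2 = 1 ∧ gNat n j = j+1) ∨
    (4 ≤ j ∧ j ≤ 2*n ∧ j % 2 = 0 ∧ gNat n j = j-1) := by
  obtain ⟨x, hx⟩ : ∃ x, gNat n j = x := ⟨_, rfl⟩
  rw [hx]
  unfold gNat at hx
  split_ifs at hx
  · exact Or.inl ⟨by omega, by omega⟩
  · exact Or.inr (Or.inl ⟨by omega, by omega⟩)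
  · exact Or.inr (Or.inr (Or.inl ⟨by omega, by omega⟩))
  · exact Or.inr (Or.inr (Or.inr (Or.inl ⟨by omega, by omega⟩)))
  · exact Or.inr (Or.inr (Or.inr (Or.inr (Or.inl ⟨by omega, by omega⟩))))
  · exact Or.inr (Or.inr (Or.inr (Or.inr (Or.inr (Or.inl ⟨by omega, by omega⟩)))))
  · exact Or.inr (Or.inr (Or.inr (Or.inr (Or.inr (Or.inr (Or.inl ⟨by omega, by omega, by omega, by omega⟩))))))
  · exact Or.inr (Or.inr (Or.inr (Or.inr (Or.inr (Or.inr (Or.inr ⟨by omega, by omega, by omega, by omega⟩))))))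

lemma pVal_rel (n : ℕ) (hn : 1 ≤ n) {i : ℕ} (hi : i < 2 * n + 4) :
    (i = 0 ∧ pVal n i = 3) ∨ (i = 1 ∧ pVal n i = 0) ∨ (i = 2 ∧ pVal n i = 1) ∨
    (i = 2*n+1 ∧ pVal n i = 2*n+2) ∨ (i = 2*n+2 ∧ pVal n i = 2*n+3) ∨
    (i = 2*n+3 ∧ pVal n i = 2*n) ∨
    (3 ≤ i ∧ i ≤ 2*n ∧ i % 2 = 1 ∧ pVal n i = i+2) ∨
    (4 ≤ i ∧ i ≤ 2*n ∧ i % 2 = 0 ∧ pVal n i = i-2) := by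
  obtain ⟨x, hx⟩ : ∃ x, pVal n i = x := ⟨_, rfl⟩
  rw [hx]
  unfold pVal at hx
  split_ifs at hx
  · exact Or.inl ⟨by omega, by omega⟩
  · exact Or.inr (Or.inl ⟨by omega, by omega⟩)
  · exact Or.inr (Or.inr (Or.inl ⟨by omega, by omega⟩))
  · exact Or.inr (Or.inr (Or.inr (Or.inl ⟨by omega, by omega⟩)))
  · exact Or.inr (Or.inr (Or.inr (Or.inr (Or.inl ⟨by omega, by omega⟩))))
  · exact Or.inr (Or.inr (Or.inr (Or.inr (Or.inr (Or.inl ⟨by omega, by omega⟩)))))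
  · exact Or.inr (Or.inr (Or.inr (Or.inr (Or.inr (Or.inr (Or.inl ⟨by omega, by omega, by omega, by omega⟩))))))
  · exact Or.inr (Or.inr (Or.inr (Or.inr (Or.inr (Or.inr (Or.inr ⟨by omega, by omega, by omega, by omega⟩))))))

lemma fNat_lt (n : ℕ) (hn : 1 ≤ n) {j : ℕ} (hj : j < 2 * n + 4) :
    fNat n j < 2 * n + 4 := by
  have := fNat_rel n hn hj; omega

lemma gNat_lt (n : ℕ) (hn : 1 ≤ n) {j : ℕ} (hj : j < 2 * n + 4) :
    gNat n j < 2 * n + 4 := by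
  have := gNat_rel n hn hj; omega

lemma gNat_fNat (n : ℕ) (hn : 1 ≤ n) {j : ℕ} (hj : j < 2 * n + 4) :
    gNat n (fNat n j) = j := by
  have h1 := fNat_rel n hn hj
  have h2 := gNat_rel n hn (fNat_lt n hn hj)
  omega

lemma fNat_gNat (n : ℕ) (hn : 1 ≤ n) {j : ℕ} (hj : j < 2 * n + 4) :
    fNat n (gNat n j) = j := by
  have h1 := gNat_rel n hn hj
  have h2 := fNat_rel n hn (gNat_lt n hn hj)
  omega

set_option maxHeartbeats 1000000 in
lemma forkCompact (n a b : ℕ) (hn : 1 ≤ n) (ha : a < 2*n+4) (hb : b < 2*n+4) :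
    (a ≠ b ∧
      (((a = 0 ∧ b = 2) ∨ (a = 1 ∧ b = 2) ∨ (2 ≤ a ∧ b = a + 1 ∧ b ≤ 2*n + 1) ∨ (a = 2*n + 1 ∧ b = 2*n + 2) ∨ (a = 2*n + 1 ∧ b = 2*n + 3)) ∨
       ((b = 0 ∧ a = 2) ∨ (b = 1 ∧ a = 2) ∨ (2 ≤ b ∧ a = b + 1 ∧ a ≤ 2*n + 1) ∨ (b = 2*n + 1 ∧ a = 2*n + 2) ∨ (b = 2*n + 1 ∧ a = 2*n + 3)))) ↔
    (a ≠ b ∧ ((min a b ≤ 1 ∧ max a b = 2) ∨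
      (2 ≤ min a b ∧ max a b = min a b + 1 ∧ max a b ≤ 2*n+1) ∨
      (min a b = 2*n+1 ∧ 2*n+2 ≤ max a b))) := by
  constructor
  · rintro ⟨hne, (h | h | h | h | h) | (h | h | h | h | h)⟩
    · exact ⟨hne, Or.inl (by omega)⟩
    · exact ⟨hne, Or.inl (by omega)⟩
    · exact ⟨hne, Or.inr (Or.inl (by omega))⟩
    · exact ⟨hne, Or.inr (Or.inr (by omega))⟩
    · exact ⟨hne, Or.inr (Or.inr (by omega))⟩
    · exact ⟨hne, Or.inl (by omega)⟩
    · exact ⟨hne, Or.inl (by omega)⟩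
    · exact ⟨hne, Or.inr (Or.inl (by omega))⟩
    · exact ⟨hne, Or.inr (Or.inr (by omega))⟩
    · exact ⟨hne, Or.inr (Or.inr (by omega))⟩
  · rintro ⟨hne, h | h | h⟩
    · have h4 : (a = 0 ∧ b = 2) ∨ (a = 1 ∧ b = 2) ∨ (b = 0 ∧ a = 2) ∨ (b = 1 ∧ a = 2) := by omega
      rcases h4 with h4|h4|h4|h4
      · exact ⟨hne, Or.inl (Or.inl h4)⟩
      · exact ⟨hne, Or.inl (Or.inr (Or.inl h4))⟩
      · exact ⟨hne, Or.inr (Or.inl h4)⟩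
      · exact ⟨hne, Or.inr (Or.inr (Or.inl h4))⟩
    · have h4 : (2 ≤ a ∧ b = a + 1 ∧ b ≤ 2*n + 1) ∨ (2 ≤ b ∧ a = b + 1 ∧ a ≤ 2*n + 1) := by omega
      rcases h4 with h4|h4
      · exact ⟨hne, Or.inl (Or.inr (Or.inr (Or.inl h4)))⟩
      · exact ⟨hne, Or.inr (Or.inr (Or.inr (Or.inl h4)))⟩
    · have h4 : (a = 2*n + 1 ∧ b = 2*n + 2) ∨ (a = 2*n + 1 ∧ b = 2*n + 3) ∨ (b = 2*n + 1 ∧ a = 2*n + 2) ∨ (b = 2*n + 1 ∧ a = 2*n + 3) := by omega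
      rcases h4 with h4|h4|h4|h4
      · exact ⟨hne, Or.inl (Or.inr (Or.inr (Or.inr (Or.inl h4))))⟩
      · exact ⟨hne, Or.inl (Or.inr (Or.inr (Or.inr (Or.inr (h4)))))⟩
      · exact ⟨hne, Or.inr (Or.inr (Or.inr (Or.inr (Or.inl h4))))⟩
      · exact ⟨hne, Or.inr (Or.inr (Or.inr (Or.inr (Or.inr (h4)))))⟩

set_option maxHeartbeats 10000000 in
lemma keyNat (n a b : ℕ) (hn : 1 ≤ n) (ha : a < 2*n+4) (hb : b < 2*n+4) :
    ((fNat n a ≠ fNat n b) ∧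
      ((fNat n a < fNat n b ∧ pVal n (fNat n b) < pVal n (fNat n a)) ∨
       (fNat n b < fNat n a ∧ pVal n (fNat n a) < pVal n (fNat n b)))) ↔
    (a ≠ b ∧ ((min a b ≤ 1 ∧ max a b = 2) ∨
      (2 ≤ min a b ∧ max a b = min a b + 1 ∧ max a b ≤ 2*n+1) ∨
      (min a b = 2*n+1 ∧ 2*n+2 ≤ max a b))) := by
  have Fa := fNat_rel n hn ha
  have Fb := fNat_rel n hn hb
  have Pa := pVal_rel n hn (fNat_lt n hn ha)
  have Pb := pVal_rel n hn (fNat_lt n hn hb)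
  rcases Fa with ⟨h1,h2⟩|⟨h1,h2⟩|⟨h1,h2⟩|⟨h1,h2⟩|⟨h1,h2⟩|⟨h1,h2⟩|⟨h1,h1',h1'',h2⟩|⟨h1,h1',h1'',h2⟩
  · have epa : pVal n (fNat n a) = 0 := by omega
    clear Pa
    rcases Fb with ⟨g1,g2⟩|⟨g1,g2⟩|⟨g1,g2⟩|⟨g1,g2⟩|⟨g1,g2⟩|⟨g1,g2⟩|⟨g1,g1',g1'',g2⟩|⟨g1,g1',g1'',g2⟩
    · have epb : pVal n (fNat n b) = 0 := by omega
      clear Pb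
      omega
    · have epb : pVal n (fNat n b) = 1 := by omega
      clear Pb
      omega
    · have epb : pVal n (fNat n b) = 3 := by omega
      clear Pb
      omega
    · have epb : pVal n (fNat n b) = 2*n := by omega
      clear Pb
      omega
    · have epb : pVal n (fNat n b) = 2*n+2 := by omega
      clear Pb
      omega
    · have epb : pVal n (fNat n b) = 2*n+3 := by omega
      clear Pb
      omega
    · have epb : pVal n (fNat n b) = b-1 := by omega
      clear Pb
      omega
    · have epb : pVal n (fNat n b) = b+1 := by omega
      clear Pb
      omega
  · have epa : pVal n (fNat n a) = 1 := by omega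
    clear Pa
    rcases Fb with ⟨g1,g2⟩|⟨g1,g2⟩|⟨g1,g2⟩|⟨g1,g2⟩|⟨g1,g2⟩|⟨g1,g2⟩|⟨g1,g1',g1'',g2⟩|⟨g1,g1',g1'',g2⟩
    · have epb : pVal n (fNat n b) = 0 := by omega
      clear Pb
      omega
    · have epb : pVal n (fNat n b) = 1 := by omega
      clear Pb
      omega
    · have epb : pVal n (fNat n b) = 3 := by omega
      clear Pb
      omega
    · have epb : pVal n (fNat n b) = 2*n := by omega
      clear Pb
      omega
    · have epb : pVal n (fNat n b) = 2*n+2 := by omega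
      clear Pb
      omega
    · have epb : pVal n (fNat n b) = 2*n+3 := by omega
      clear Pb
      omega
    · have epb : pVal n (fNat n b) = b-1 := by omega
      clear Pb
      omega
    · have epb : pVal n (fNat n b) = b+1 := by omega
      clear Pb
      omega
  · have epa : pVal n (fNat n a) = 3 := by omega
    clear Pa
    rcases Fb with ⟨g1,g2⟩|⟨g1,g2⟩|⟨g1,g2⟩|⟨g1,g2⟩|⟨g1,g2⟩|⟨g1,g2⟩|⟨g1,g1',g1'',g2⟩|⟨g1,g1',g1'',g2⟩
    · have epb : pVal n (fNat n b) = 0 := by omega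
      clear Pb
      omega
    · have epb : pVal n (fNat n b) = 1 := by omega
      clear Pb
      omega
    · have epb : pVal n (fNat n b) = 3 := by omega
      clear Pb
      omega
    · have epb : pVal n (fNat n b) = 2*n := by omega
      clear Pb
      omega
    · have epb : pVal n (fNat n b) = 2*n+2 := by omega
      clear Pb
      omega
    · have epb : pVal n (fNat n b) = 2*n+3 := by omega
      clear Pb
      omega
    · have epb : pVal n (fNat n b) = b-1 := by omega
      clear Pb
      omega
    · have epb : pVal n (fNat n b) = b+1 := by omega
      clear Pb
      omega
  · have epa : pVal n (fNat n a) = 2*n := by omega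
    clear Pa
    rcases Fb with ⟨g1,g2⟩|⟨g1,g2⟩|⟨g1,g2⟩|⟨g1,g2⟩|⟨g1,g2⟩|⟨g1,g2⟩|⟨g1,g1',g1'',g2⟩|⟨g1,g1',g1'',g2⟩
    · have epb : pVal n (fNat n b) = 0 := by omega
      clear Pb
      omega
    · have epb : pVal n (fNat n b) = 1 := by omega
      clear Pb
      omega
    · have epb : pVal n (fNat n b) = 3 := by omega
      clear Pb
      omega
    · have epb : pVal n (fNat n b) = 2*n := by omega
      clear Pb
      omega
    · have epb : pVal n (fNat n b) = 2*n+2 := by omega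
      clear Pb
      omega
    · have epb : pVal n (fNat n b) = 2*n+3 := by omega
      clear Pb
      omega
    · have epb : pVal n (fNat n b) = b-1 := by omega
      clear Pb
      omega
    · have epb : pVal n (fNat n b) = b+1 := by omega
      clear Pb
      omega
  · have epa : pVal n (fNat n a) = 2*n+2 := by omega
    clear Pa
    rcases Fb with ⟨g1,g2⟩|⟨g1,g2⟩|⟨g1,g2⟩|⟨g1,g2⟩|⟨g1,g2⟩|⟨g1,g2⟩|⟨g1,g1',g1'',g2⟩|⟨g1,g1',g1'',g2⟩
    · have epb : pVal n (fNat n b) = 0 := by omega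
      clear Pb
      omega
    · have epb : pVal n (fNat n b) = 1 := by omega
      clear Pb
      omega
    · have epb : pVal n (fNat n b) = 3 := by omega
      clear Pb
      omega
    · have epb : pVal n (fNat n b) = 2*n := by omega
      clear Pb
      omega
    · have epb : pVal n (fNat n b) = 2*n+2 := by omega
      clear Pb
      omega
    · have epb : pVal n (fNat n b) = 2*n+3 := by omega
      clear Pb
      omega
    · have epb : pVal n (fNat n b) = b-1 := by omega
      clear Pb
      omega
    · have epb : pVal n (fNat n b) = b+1 := by omega
      clear Pb
      omega
  · have epa : pVal n (fNat n a) = 2*n+3 := by omega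
    clear Pa
    rcases Fb with ⟨g1,g2⟩|⟨g1,g2⟩|⟨g1,g2⟩|⟨g1,g2⟩|⟨g1,g2⟩|⟨g1,g2⟩|⟨g1,g1',g1'',g2⟩|⟨g1,g1',g1'',g2⟩
    · have epb : pVal n (fNat n b) = 0 := by omega
      clear Pb
      omega
    · have epb : pVal n (fNat n b) = 1 := by omega
      clear Pb
      omega
    · have epb : pVal n (fNat n b) = 3 := by omega
      clear Pb
      omega
    · have epb : pVal n (fNat n b) = 2*n := by omega
      clear Pb
      omega
    · have epb : pVal n (fNat n b) = 2*n+2 := by omega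
      clear Pb
      omega
    · have epb : pVal n (fNat n b) = 2*n+3 := by omega
      clear Pb
      omega
    · have epb : pVal n (fNat n b) = b-1 := by omega
      clear Pb
      omega
    · have epb : pVal n (fNat n b) = b+1 := by omega
      clear Pb
      omega
  · have epa : pVal n (fNat n a) = a-1 := by omega
    clear Pa
    rcases Fb with ⟨g1,g2⟩|⟨g1,g2⟩|⟨g1,g2⟩|⟨g1,g2⟩|⟨g1,g2⟩|⟨g1,g2⟩|⟨g1,g1',g1'',g2⟩|⟨g1,g1',g1'',g2⟩
    · have epb : pVal n (fNat n b) = 0 := by omega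
      clear Pb
      omega
    · have epb : pVal n (fNat n b) = 1 := by omega
      clear Pb
      omega
    · have epb : pVal n (fNat n b) = 3 := by omega
      clear Pb
      omega
    · have epb : pVal n (fNat n b) = 2*n := by omega
      clear Pb
      omega
    · have epb : pVal n (fNat n b) = 2*n+2 := by omega
      clear Pb
      omega
    · have epb : pVal n (fNat n b) = 2*n+3 := by omega
      clear Pb
      omega
    · have epb : pVal n (fNat n b) = b-1 := by omega
      clear Pb
      omega
    · have epb : pVal n (fNat n b) = b+1 := by omega
      clear Pb
      omega
  · have epa : pVal n (fNat n a) = a+1 := by omega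
    clear Pa
    rcases Fb with ⟨g1,g2⟩|⟨g1,g2⟩|⟨g1,g2⟩|⟨g1,g2⟩|⟨g1,g2⟩|⟨g1,g2⟩|⟨g1,g1',g1'',g2⟩|⟨g1,g1',g1'',g2⟩
    · have epb : pVal n (fNat n b) = 0 := by omega
      clear Pb
      omega
    · have epb : pVal n (fNat n b) = 1 := by omega
      clear Pb
      omega
    · have epb : pVal n (fNat n b) = 3 := by omega
      clear Pb
      omega
    · have epb : pVal n (fNat n b) = 2*n := by omega
      clear Pb
      omega
    · have epb : pVal n (fNat n b) = 2*n+2 := by omega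
      clear Pb
      omega
    · have epb : pVal n (fNat n b) = 2*n+3 := by omega
      clear Pb
      omega
    · have epb : pVal n (fNat n b) = b-1 := by omega
      clear Pb
      omega
    · have epb : pVal n (fNat n b) = b+1 := by omega
      clear Pb
      omega

/-- For every `n ≥ 1`, the permutation graph of `p_{2n}` is
isomorphic to the fork graph `F_{2n}`; in particular every fork graph `F_{2n}`
on an even-length path is a permutation graph. -/
theorem permGraph_p_iso_fork (n : ℕ) (hn : 1 ≤ n)
    (σ : Equiv.Perm (Fin (2 * n + 4)))
    (hσ : ∀ i : Fin (2 * n + 4), (σ i : ℕ) = pVal n (i : ℕ)) :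
    Nonempty (permGraph σ ≃g forkGraph (2 * n)) ∧
    ∃ π : Equiv.Perm (Fin (2 * n + 4)), Nonempty (permGraph π ≃g forkGraph (2 * n)) := by
  have iso : forkGraph (2 * n) ≃g permGraph σ := by
    refine ⟨⟨fun a => ⟨fNat n a, fNat_lt n hn a.isLt⟩,
     fun a => ⟨gNat n a, gNat_lt n hn a.isLt⟩,
     fun a => Fin.ext (gNat_fNat n hn a.isLt),
     fun a => Fin.ext (fNat_gNat n hn a.isLt)⟩, ?_⟩
    intro a b
    have key := keyNat n a b hn a.isLt b.isLt
    have fc := forkCompact n a b hn a.isLt b.isLt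
    simp only [permGraph, forkGraph, SimpleGraph.fromRel_adj, Fin.lt_def, ne_eq,
      Fin.ext_iff, Equiv.coe_fn_mk, hσ]
    exact key.trans fc.symm
  exact ⟨⟨iso.symm⟩, σ, ⟨iso.symm⟩⟩
end

section
/- If a permutation τ of {1,…,n} is obtained from a permutation σ of {1,…,n} by a Type II move, then the permutation graph G_τ has strictly more edges than the permutation graph G_σ (while the number of vertices is unchanged); equivalently, τ has strictly more inversions than σ. -/
/-- `τ` is obtained from `σ` by a Type II move at positions `p < q`:
`σ p < σ q`, every value strictly between `σ p` and `σ q` occurs at a position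
smaller than `q`, and `τ` is `σ` with the values at positions `p` and `q` swapped. -/
def PermTypeIIAt {n : ℕ} (σ τ : Equiv.Perm (Fin n)) (p q : Fin n) : Prop :=
  p < q ∧ σ p < σ q ∧ (∀ v : Fin n, σ p < v → v < σ q → σ.symm v < q) ∧
    τ = σ * Equiv.swap p q

/-- `τ` is obtained from `σ` by a Type II move. -/
def PermTypeII {n : ℕ} (σ τ : Equiv.Perm (Fin n)) : Prop :=
  ∃ p q : Fin n, PermTypeIIAt σ τ p q

/-- `σ` is Type-I-below `τ`: there is a strictly increasing choice of positions
`f` with `τ (f j) ≥ σ j` for all `j`, and `σ` order isomorphic to the subword of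
`τ` on those positions. -/
def TypeIBelow {n m : ℕ} (σ : Equiv.Perm (Fin n)) (τ : Equiv.Perm (Fin m)) : Prop :=
  ∃ f : Fin n → Fin m, StrictMono f ∧ (∀ j, (σ j : ℕ) ≤ (τ (f j) : ℕ)) ∧
    ∀ j k, σ j < σ k ↔ τ (f j) < τ (f k)

/-- One step of the order `≤ᵢ` on permutations of arbitrary sizes: either a
Type-I-below relation or (for equal sizes) a Type II move. -/
def PermStep : (Σ n : ℕ, Equiv.Perm (Fin n)) → (Σ n : ℕ, Equiv.Perm (Fin n)) → Prop :=
  fun x y => TypeIBelow x.2 y.2 ∨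
    ∃ h : x.1 = y.1, PermTypeII (Equiv.permCongr (finCongr h) x.2) y.2

/-- The order `≤ᵢ` on permutations of arbitrary sizes: the reflexive–transitive
closure of the union of the Type-I-below relation and the Type II move relation. -/
def PermLeI : (Σ n : ℕ, Equiv.Perm (Fin n)) → (Σ n : ℕ, Equiv.Perm (Fin n)) → Prop :=
  Relation.ReflTransGen PermStep

lemma permGraph_card {n : ℕ} (σ : Equiv.Perm (Fin n)) :
    (SimpleGraph.fromRel (fun i j : Fin n => i < j ∧ σ j < σ i)).edgeSet.ncard =
      (Finset.univ.filter fun p : Fin n × Fin n => p.1 < p.2 ∧ σ p.2 < σ p.1).card := by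
  classical
  set A := (Finset.univ.filter fun p : Fin n × Fin n => p.1 < p.2 ∧ σ p.2 < σ p.1)
  have himg : (SimpleGraph.fromRel (fun i j : Fin n => i < j ∧ σ j < σ i)).edgeSet =
      (fun x : Fin n × Fin n => Sym2.mk x.1 x.2) '' (A : Set (Fin n × Fin n)) := by
    ext e
    induction e with
    | _ i j =>
      simp only [SimpleGraph.mem_edgeSet, SimpleGraph.fromRel_adj, Set.mem_image,
        Finset.coe_filter, Set.mem_setOf_eq, Finset.mem_univ, true_and, A]
      constructor
      · rintro ⟨hne, h | h⟩
        · exact ⟨(i, j), h, rfl⟩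
        · exact ⟨(j, i), h, Sym2.eq_swap⟩
      · rintro ⟨⟨a, b⟩, hab, he⟩
        replace he := (Sym2.mk_eq_mk_iff (p := (a, b)) (q := (i, j))).mp he
        rcases he with he | he
        · rw [Prod.mk.injEq] at he
          obtain ⟨rfl, rfl⟩ := he
          exact ⟨hab.1.ne, Or.inl hab⟩
        · simp only [Prod.swap_prod_mk, Prod.mk.injEq] at he
          obtain ⟨rfl, rfl⟩ := he
          exact ⟨hab.1.ne', Or.inr hab⟩
  rw [himg, Set.ncard_image_of_injOn, Set.ncard_coe_finset]
  intro x hx y hy hxy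
  simp only [Finset.coe_filter, Set.mem_setOf_eq, Finset.mem_univ, true_and, A] at hx hy
  replace hxy := Sym2.mk_eq_mk_iff.mp hxy
  rcases hxy with h | h
  · exact h
  · exfalso
    rw [h] at hx
    simp only [Prod.fst_swap, Prod.snd_swap] at hx
    exact absurd hy.1 hx.1.asymm

lemma inv_lt_aux {n : ℕ} (σ τ : Equiv.Perm (Fin n)) (p q : Fin n)
    (hpq : p < q) (hv : σ p < σ q)
    (hmid : ∀ v : Fin n, σ p < v → v < σ q → σ.symm v < q)
    (hτ : τ = σ * Equiv.swap p q) :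
    (Finset.univ.filter fun p : Fin n × Fin n => p.1 < p.2 ∧ σ p.2 < σ p.1).card <
      (Finset.univ.filter fun p : Fin n × Fin n => p.1 < p.2 ∧ τ p.2 < τ p.1).card := by
  classical
  have htp : τ p = σ q := by rw [hτ]; simp [Equiv.swap_apply_left]
  have htq : τ q = σ p := by rw [hτ]; simp [Equiv.swap_apply_right]
  have hti : ∀ i, i ≠ p → i ≠ q → τ i = σ i := by
    intro i h1 h2; rw [hτ]; simp [Equiv.swap_apply_of_ne_of_ne h1 h2]
  set A := (Finset.univ.filter fun x : Fin n × Fin n => x.1 < x.2 ∧ σ x.2 < σ x.1) with hA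
  set B := (Finset.univ.filter fun x : Fin n × Fin n => x.1 < x.2 ∧ τ x.2 < τ x.1) with hB
  have hpqB : (p, q) ∈ B := by
    simp only [hB, Finset.mem_filter, Finset.mem_univ, true_and]
    exact ⟨hpq, by rw [htp, htq]; exact hv⟩
  set G : Fin n × Fin n → Fin n × Fin n :=
    fun x => if x.2 = p ∧ σ x.1 < σ q then (x.1, q) else x with hG
  have hmaps : ∀ x ∈ A, G x ∈ B.erase (p, q) := by
    rintro ⟨i, j⟩ hij
    simp only [hA, Finset.mem_filter, Finset.mem_univ, true_and] at hij
    obtain ⟨hlt, hinv⟩ := hij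
    by_cases hc : j = p ∧ σ i < σ q
    · obtain ⟨hjp, hiq⟩ := hc
      have hGx : G (i, j) = (i, q) := by simp only [hG]; rw [if_pos ⟨hjp, hiq⟩]
      rw [hGx, Finset.mem_erase]
      have hip : i < p := hjp ▸ hlt
      have hiq' : i < q := lt_trans hip hpq
      refine ⟨by simp [Prod.mk.injEq, hip.ne], ?_⟩
      simp only [hB, Finset.mem_filter, Finset.mem_univ, true_and]
      refine ⟨hiq', ?_⟩
      rw [htq, hti i hip.ne hiq'.ne]
      rw [hjp] at hinv
      exact hinv
    · have hGx : G (i, j) = (i, j) := by simp only [hG]; rw [if_neg hc]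
      rw [hGx, Finset.mem_erase]
      have hne : (i, j) ≠ (p, q) := by
        intro h
        rw [Prod.mk.injEq] at h
        obtain ⟨rfl, rfl⟩ := h
        exact absurd hv hinv.asymm
      refine ⟨hne, ?_⟩
      simp only [hB, Finset.mem_filter, Finset.mem_univ, true_and]
      refine ⟨hlt, ?_⟩
      by_cases hip : i = p
      · rw [hip] at hlt hinv
        have hjp : j ≠ p := hlt.ne'
        have hjq : j ≠ q := fun h => (h ▸ hinv).asymm hv
        rw [hip, htp, hti j hjp hjq]
        exact lt_trans hinv hv
      · by_cases hiq : i = q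
        · rw [hiq] at hlt hinv
          have hjq : j ≠ q := hlt.ne'
          have hjp : j ≠ p := (lt_trans hpq hlt).ne'
          rw [hiq, htq, hti j hjp hjq]
          by_contra hle
          push_neg at hle
          have h1 : σ p < σ j := lt_of_le_of_ne hle (fun h => hjp (σ.injective h.symm))
          have h2 := hmid (σ j) h1 hinv
          rw [Equiv.symm_apply_apply] at h2
          exact absurd h2 hlt.asymm
        · by_cases hjp : j = p
          · push_neg at hc
            have h1 : σ q ≤ σ i := hc hjp
            have h2 : σ q ≠ σ i := fun h => hiq (σ.injective h.symm)
            rw [hjp, htp, hti i hip hiq]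
            exact lt_of_le_of_ne h1 h2
          · by_cases hjq : j = q
            · rw [hjq] at hinv
              rw [hjq, htq, hti i hip hiq]
              exact lt_trans hv hinv
            · rw [hti i hip hiq, hti j hjp hjq]
              exact hinv
  have hinj : Set.InjOn G A := by
    rintro ⟨i, j⟩ hx ⟨k, l⟩ hy hxy
    simp only [hA, Finset.coe_filter, Set.mem_setOf_eq, Finset.mem_univ, true_and] at hx hy
    by_cases hc1 : j = p ∧ σ i < σ q <;> by_cases hc2 : l = p ∧ σ k < σ q
    · have e1 : G (i, j) = (i, q) := by simp only [hG]; rw [if_pos hc1]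
      have e2 : G (k, l) = (k, q) := by simp only [hG]; rw [if_pos hc2]
      rw [e1, e2, Prod.mk.injEq] at hxy
      rw [Prod.mk.injEq]
      exact ⟨hxy.1, hc1.1.trans hc2.1.symm⟩
    · have e1 : G (i, j) = (i, q) := by simp only [hG]; rw [if_pos hc1]
      have e2 : G (k, l) = (k, l) := by simp only [hG]; rw [if_neg hc2]
      rw [e1, e2, Prod.mk.injEq] at hxy
      exfalso
      rw [← hxy.2] at hy
      exact absurd hy.2 (hxy.1 ▸ hc1.2).asymm
    · have e1 : G (i, j) = (i, j) := by simp only [hG]; rw [if_neg hc1]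
      have e2 : G (k, l) = (k, q) := by simp only [hG]; rw [if_pos hc2]
      rw [e1, e2, Prod.mk.injEq] at hxy
      exfalso
      rw [hxy.2] at hx
      exact absurd hx.2 (hxy.1 ▸ hc2.2).asymm
    · have e1 : G (i, j) = (i, j) := by simp only [hG]; rw [if_neg hc1]
      have e2 : G (k, l) = (k, l) := by simp only [hG]; rw [if_neg hc2]
      rw [e1, e2] at hxy
      exact hxy
  calc A.card ≤ (B.erase (p, q)).card := Finset.card_le_card_of_injOn G hmaps hinj
    _ < B.card := Finset.card_erase_lt_of_mem hpqB

/-- If `τ` is obtained from `σ` by a Type II move, then the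
permutation graph `G_τ` has strictly more edges than `G_σ` (the number of
vertices being unchanged); equivalently, `τ` has strictly more inversions
than `σ`. -/
theorem typeII_strictly_more_edges {n : ℕ} (σ τ : Equiv.Perm (Fin n))
    (h : PermTypeII σ τ) :
    (permGraph σ).edgeSet.ncard < (permGraph τ).edgeSet.ncard ∧
    (Finset.univ.filter fun p : Fin n × Fin n => p.1 < p.2 ∧ σ p.2 < σ p.1).card <
      (Finset.univ.filter fun p : Fin n × Fin n => p.1 < p.2 ∧ τ p.2 < τ p.1).card := by
  obtain ⟨p, q, hpq, hv, hmid, hτ⟩ := h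
  have key := inv_lt_aux σ τ p q hpq hv hmid hτ
  refine ⟨?_, key⟩
  rw [show permGraph σ = SimpleGraph.fromRel (fun i j : Fin n => i < j ∧ σ j < σ i) from rfl,
    show permGraph τ = SimpleGraph.fromRel (fun i j : Fin n => i < j ∧ τ j < τ i) from rfl,
    permGraph_card σ, permGraph_card τ]
  exact key
end

section
/- Type I and Type II moves on permutations preserve cycles in permutation graphs: if σ ≤_i τ and the permutation graph G_σ contains a cycle (i.e., G_σ is not acyclic), then the permutation graph G_τ also contains a cycle. -/
open SimpleGraph

lemma permGraph_adj {n : ℕ} (σ : Equiv.Perm (Fin n)) {i j : Fin n} :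
    (permGraph σ).Adj i j ↔ i ≠ j ∧ ((i < j ∧ σ j < σ i) ∨ (j < i ∧ σ i < σ j)) := by
  simp [permGraph, SimpleGraph.fromRel_adj]

lemma reachable_of_adj_reachable {V : Type*} {G H : SimpleGraph V}
    (h : ∀ x y : V, G.Adj x y → H.Reachable x y) {u v : V} (hr : G.Reachable u v) :
    H.Reachable u v := by
  obtain ⟨w⟩ := hr
  induction w with
  | nil => exact Reachable.refl _
  | cons ha _ ih => exact (h _ _ ha).trans ih

lemma typeIBelow_preserve {n m : ℕ} {σ : Equiv.Perm (Fin n)} {τ : Equiv.Perm (Fin m)}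
    (h : TypeIBelow σ τ) (hc : ¬ (permGraph σ).IsAcyclic) : ¬ (permGraph τ).IsAcyclic := by
  obtain ⟨f, hf, -, hiso⟩ := h
  intro hac
  apply hc
  intro v c hcyc
  have hhom : ∀ {a b : Fin n}, (permGraph σ).Adj a b → (permGraph τ).Adj (f a) (f b) := by
    intro a b hab
    rw [permGraph_adj] at hab ⊢
    refine ⟨fun hfe => hab.1 (hf.injective hfe), ?_⟩
    exact hab.2.imp (fun h' => ⟨hf h'.1, (hiso _ _).1 h'.2⟩)
      (fun h' => ⟨hf h'.1, (hiso _ _).1 h'.2⟩)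
  exact hac (c.map ⟨f, fun h' => hhom h'⟩)
    ((Walk.map_isCycle_iff_of_injective hf.injective).2 hcyc)

lemma typeII_preserve {n : ℕ} {σ τ : Equiv.Perm (Fin n)} (h : PermTypeII σ τ)
    (hc : ¬ (permGraph σ).IsAcyclic) : ¬ (permGraph τ).IsAcyclic := by
  obtain ⟨p, q, hpq, hval, hbet, rfl⟩ := h
  have hτp : (σ * Equiv.swap p q) p = σ q := by simp
  have hτq : (σ * Equiv.swap p q) q = σ p := by simp
  have hτo : ∀ z : Fin n, z ≠ p → z ≠ q → (σ * Equiv.swap p q) z = σ z := by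
    intro z h1 h2
    simp [Equiv.swap_apply_of_ne_of_ne h1 h2]
  have hbet' : ∀ z : Fin n, σ p < σ z → σ z < σ q → z < q := by
    intro z h1 h2
    have := hbet (σ z) h1 h2
    simpa using this
  have adj_down : ∀ {x y : Fin n}, x < y → (permGraph σ).Adj x y → σ y < σ x := by
    intro x y h1 h2
    rw [permGraph_adj] at h2
    rcases h2.2 with ⟨_, h3⟩ | ⟨h3, _⟩
    · exact h3
    · exact absurd h1 h3.asymm
  have survive : ∀ x y : Fin n, x < y → σ y < σ x →
      (permGraph (σ * Equiv.swap p q)).Adj x y ∨ (y = p ∧ σ p < σ x ∧ σ x < σ q) := by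
    intro x y hxy hval'
    by_cases hyp : y = p
    · rw [hyp] at hxy hval' ⊢
      have hxq : x ≠ q := (hxy.trans hpq).ne
      have hxp : x ≠ p := hxy.ne
      rcases lt_or_ge (σ q) (σ x) with hcase | hcase
      · left
        rw [permGraph_adj]
        refine ⟨hxp, Or.inl ⟨hxy, ?_⟩⟩
        rw [hτp, hτo x hxp hxq]
        exact hcase
      · right
        exact ⟨rfl, hval', lt_of_le_of_ne hcase (fun he => hxq (σ.injective he))⟩
    · by_cases hyq : y = q
      · rw [hyq] at hxy hval' ⊢
        left
        have hxp : x ≠ p := by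
          rintro rfl
          exact absurd hval hval'.asymm
        have hxq : x ≠ q := hxy.ne
        rw [permGraph_adj]
        refine ⟨hxq, Or.inl ⟨hxy, ?_⟩⟩
        rw [hτq, hτo x hxp hxq]
        exact hval.trans hval'
      · left
        rw [permGraph_adj]
        refine ⟨hxy.ne, Or.inl ⟨hxy, ?_⟩⟩
        rw [hτo y hyp hyq]
        by_cases hxp : x = p
        · rw [hxp] at hval' ⊢
          rw [hτp]
          exact hval'.trans hval
        · by_cases hxq : x = q
          · rw [hxq] at hxy hval' ⊢
            rw [hτq]
            rcases lt_trichotomy (σ y) (σ p) with h1 | h1 | h1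
            · exact h1
            · exact absurd (σ.injective h1) hyp
            · exact absurd (hbet' y h1 hval') hxy.asymm
          · rw [hτo x hxp hxq]
            exact hval'
  have adjpq : (permGraph (σ * Equiv.swap p q)).Adj p q := by
    rw [permGraph_adj]
    refine ⟨hpq.ne, Or.inl ⟨hpq, ?_⟩⟩
    rw [hτp, hτq]
    exact hval
  have adjxq : ∀ x : Fin n, x < p → σ p < σ x → σ x < σ q →
      (permGraph (σ * Equiv.swap p q)).Adj x q := by
    intro x h1 h2 h3
    have hxp : x ≠ p := h1.ne
    have hxq : x ≠ q := (h1.trans hpq).ne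
    rw [permGraph_adj]
    refine ⟨hxq, Or.inl ⟨h1.trans hpq, ?_⟩⟩
    rw [hτq, hτo x hxp hxq]
    exact h2
  have notσ : ∀ x : Fin n, x < q → σ x < σ q → ¬ (permGraph σ).Adj x q := by
    intro x h1 h2 hadj
    rw [permGraph_adj] at hadj
    rcases hadj.2 with ⟨_, h4⟩ | ⟨h3, _⟩
    · exact h2.asymm h4
    · exact h1.asymm h3
  have del_adj : ∀ (G : SimpleGraph (Fin n)) (e : Sym2 (Fin n)) (x y : Fin n),
      (G \ fromEdgeSet {e}).Adj x y ↔ G.Adj x y ∧ s(x,y) ≠ e := by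
    intro G e x y
    simp only [sdiff_adj, fromEdgeSet_adj, Set.mem_singleton_iff, not_and]
    constructor
    · rintro ⟨h1, h2⟩
      exact ⟨h1, fun he => (h2 he h1.ne).elim⟩
    · rintro ⟨h1, h2⟩
      exact ⟨h1, fun hc' _ => h2 hc'⟩
  -- extract a non-bridge edge of G_σ
  rw [isAcyclic_iff_forall_adj_isBridge] at hc
  push_neg at hc
  obtain ⟨a₀, b₀, hab₀, hnb₀⟩ := hc
  rw [isBridge_iff] at hnb₀
  push_neg at hnb₀
  have hreach₀ : ((permGraph σ) \ fromEdgeSet {s(a₀,b₀)}).Reachable a₀ b₀ := hnb₀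
  suffices key : ∀ a b : Fin n, a < b → (permGraph σ).Adj a b →
      ((permGraph σ) \ fromEdgeSet {s(a,b)}).Reachable a b →
      ¬ (permGraph (σ * Equiv.swap p q)).IsAcyclic by
    rcases lt_or_gt_of_ne hab₀.ne with h1 | h1
    · exact key a₀ b₀ h1 hab₀ hreach₀
    · refine key b₀ a₀ h1 hab₀.symm ?_
      rw [Sym2.eq_swap]
      exact hreach₀.symm
  intro a b hab hadj hreach hac
  rw [isAcyclic_iff_forall_adj_isBridge] at hac
  have reroute : ∀ e' : Sym2 (Fin n),
      (∀ x y : Fin n, (permGraph σ).Adj x y → s(x,y) ≠ s(a,b) → s(x,y) ≠ e') →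
      (∀ x : Fin n, x < p → σ p < σ x → σ x < σ q → s(x,p) ≠ s(a,b) → s(x,q) ≠ e') →
      s(q,p) ≠ e' →
      ∀ u v : Fin n, ((permGraph σ) \ fromEdgeSet {s(a,b)}).Reachable u v →
        ((permGraph (σ * Equiv.swap p q)) \ fromEdgeSet {e'}).Reachable u v := by
    intro e' H1 H2 H3 u v hr
    refine reachable_of_adj_reachable ?_ hr
    have step : ∀ x y : Fin n, x < y → (permGraph σ).Adj x y → s(x,y) ≠ s(a,b) →
        ((permGraph (σ * Equiv.swap p q)) \ fromEdgeSet {e'}).Reachable x y := by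
      intro x y hxy hadjxy hne
      rcases survive x y hxy (adj_down hxy hadjxy) with hA | ⟨hyp, h2, h3⟩
      · exact (((del_adj _ _ _ _).2 ⟨hA, H1 x y hadjxy hne⟩)).reachable
      · rw [hyp] at hxy hne ⊢
        have e1 : ((permGraph (σ * Equiv.swap p q)) \ fromEdgeSet {e'}).Adj x q :=
          (del_adj _ _ _ _).2 ⟨adjxq x hxy h2 h3, H2 x hxy h2 h3 hne⟩
        have e2 : ((permGraph (σ * Equiv.swap p q)) \ fromEdgeSet {e'}).Adj q p :=
          (del_adj _ _ _ _).2 ⟨adjpq.symm, H3⟩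
        exact e1.reachable.trans e2.reachable
    intro x y hxy
    rw [del_adj] at hxy
    obtain ⟨h1, h2⟩ := hxy
    rcases lt_or_gt_of_ne h1.ne with ho | ho
    · exact step x y ho h1 h2
    · refine (step y x ho h1.symm ?_).symm
      rwa [Sym2.eq_swap] at h2
  by_cases hrem : b = p ∧ σ p < σ a ∧ σ a < σ q
  · obtain ⟨hbp, h2, h3⟩ := hrem
    rw [hbp] at hab hadj hreach reroute
    -- the edge s(a,p) is removed; use the new edge s(a,q)
    have haq : a < q := hab.trans hpq
    have hadjτ : (permGraph (σ * Equiv.swap p q)).Adj a q := adjxq a hab h2 h3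
    have hbr := hac hadjτ
    rw [isBridge_iff] at hbr
    refine hbr ?_
    have H1 : ∀ x y : Fin n, (permGraph σ).Adj x y → s(x,y) ≠ s(a,p) → s(x,y) ≠ s(a,q) := by
      intro x y hxy _ he
      rcases Sym2.eq_iff.1 he with ⟨h4, h5⟩ | ⟨h4, h5⟩
      · rw [h4, h5] at hxy
        exact notσ a haq h3 hxy
      · rw [h4, h5] at hxy
        exact notσ a haq h3 hxy.symm
    have H2 : ∀ x : Fin n, x < p → σ p < σ x → σ x < σ q → s(x,p) ≠ s(a,p) → s(x,q) ≠ s(a,q) := by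
      intro x hx1 _ _ hne he
      rcases Sym2.eq_iff.1 he with ⟨h4, _⟩ | ⟨h4, _⟩
      · exact hne (by rw [h4])
      · exact (hx1.trans hpq).ne h4
    have H3 : s(q,p) ≠ s(a,q) := by
      intro he
      rcases Sym2.eq_iff.1 he with ⟨_, h5⟩ | ⟨_, h5⟩
      · exact hpq.ne h5
      · exact hab.ne' h5
    have hr1 := reroute (s(a,q)) H1 H2 H3 a p hreach
    have e2 : ((permGraph (σ * Equiv.swap p q)) \ fromEdgeSet {s(a,q)}).Adj p q := by
      refine (del_adj _ _ _ _).2 ⟨adjpq, ?_⟩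
      intro he
      rcases Sym2.eq_iff.1 he with ⟨h4, _⟩ | ⟨h4, h5⟩
      · exact hab.ne' h4
      · exact hpq.ne h4
    exact hr1.trans e2.reachable
  · -- the edge s(a,b) survives
    have hvab := adj_down hab hadj
    have hadjτ : (permGraph (σ * Equiv.swap p q)).Adj a b := by
      rcases survive a b hab hvab with hA | hR
      · exact hA
      · exact absurd hR hrem
    have hbr := hac hadjτ
    rw [isBridge_iff] at hbr
    refine hbr ?_
    have H1 : ∀ x y : Fin n, (permGraph σ).Adj x y → s(x,y) ≠ s(a,b) → s(x,y) ≠ s(a,b) :=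
      fun _ _ _ h' => h'
    have H2 : ∀ x : Fin n, x < p → σ p < σ x → σ x < σ q → s(x,p) ≠ s(a,b) → s(x,q) ≠ s(a,b) := by
      intro x hx1 _ hx3 _ he
      have hxq : x < q := hx1.trans hpq
      have hadj' : (permGraph σ).Adj x q := by
        rcases Sym2.eq_iff.1 he with ⟨h4, h5⟩ | ⟨h4, h5⟩
        · rw [h4, h5]
          exact hadj
        · rw [h4, h5]
          exact hadj.symm
      exact notσ x hxq hx3 hadj'
    have H3 : s(q,p) ≠ s(a,b) := by
      intro he
      have hadj' : (permGraph σ).Adj p q := by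
        rcases Sym2.eq_iff.1 he with ⟨h4, h5⟩ | ⟨h4, h5⟩
        · rw [h5, h4]
          exact hadj.symm
        · rw [h5, h4]
          exact hadj
      exact notσ p hpq hval hadj'
    exact reroute (s(a,b)) H1 H2 H3 a b hreach

lemma step_preserve (x y : Σ n : ℕ, Equiv.Perm (Fin n)) (h : PermStep x y)
    (hc : ¬ (permGraph x.2).IsAcyclic) : ¬ (permGraph y.2).IsAcyclic := by
  obtain ⟨nx, σ⟩ := x
  obtain ⟨ny, τ'⟩ := y
  rcases h with h | ⟨he, h⟩
  · exact typeIBelow_preserve h hc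
  · dsimp at he h hc ⊢
    subst he
    have hcongr : Equiv.permCongr (finCongr rfl) σ = σ := by
      ext i
      simp [Equiv.permCongr_apply]
    rw [hcongr] at h
    exact typeII_preserve h hc

/-- Type I and Type II moves preserve cycles in permutation
graphs: if `σ ≤ᵢ τ` and `G_σ` contains a cycle (is not acyclic), then `G_τ`
also contains a cycle. -/
theorem moves_preserve_cycles (x y : Σ n : ℕ, Equiv.Perm (Fin n))
    (h : PermLeI x y) (hc : ¬ (permGraph x.2).IsAcyclic) :
    ¬ (permGraph y.2).IsAcyclic := by
  induction h with
  | refl => exact hc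
  | tail _ hstep ih => exact step_preserve _ _ hstep ih
end

section
/- Let Γ be an intertwined perfect matching on {1,…,2n} and Γ' an intertwined perfect matching on {1,…,2m}. Then Γ can be transformed into Γ' by a finite sequence of Type I moves if and only if the word w_Γ is order isomorphic to a subword of w_{Γ'}, i.e., there exist indices 1 ≤ i_1 < ⋯ < i_n ≤ m such that (w_{Γ'})_{i_j} ≥ (w_Γ)_j for all j, and (w_Γ)_j < (w_Γ)_k ⟺ (w_{Γ'})_{i_j} < (w_{Γ'})_{i_k} for all j, k. -/
/-- A vertex `v` is *in* the matching `Γ` if it is an endpoint of some edge of `Γ`. -/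
def InMatch (Γ : Finset (Sym2 ℕ)) (v : ℕ) : Prop := ∃ e ∈ Γ, v ∈ e

/-- A matching on ℕ: a finite set of edges (unordered pairs of distinct naturals)
that are pairwise vertex-disjoint. -/
def IsMatching (Γ : Finset (Sym2 ℕ)) : Prop :=
  (∀ e ∈ Γ, ¬ e.IsDiag) ∧
    ∀ e ∈ Γ, ∀ f ∈ Γ, e ≠ f → ∀ v : ℕ, v ∈ e → v ∉ f

/-- Type I(a) move: add a single new edge whose endpoints are not in `Γ`. -/
def TypeIa (Γ Γ' : Finset (Sym2 ℕ)) : Prop :=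
  ∃ i j : ℕ, i ≠ j ∧ ¬ InMatch Γ i ∧ ¬ InMatch Γ j ∧ Γ' = insert s(i, j) Γ

/-- Type I(b) move: replace an edge `{i,j}` by `{i,j+1}` when `j+1` is not in `Γ`. -/
def TypeIb (Γ Γ' : Finset (Sym2 ℕ)) : Prop :=
  ∃ i j : ℕ, s(i, j) ∈ Γ ∧ ¬ InMatch Γ (j + 1) ∧
    Γ' = insert s(i, j + 1) (Γ.erase s(i, j))

/-- Type II(a) move. -/
def TypeIIa (Γ Γ' : Finset (Sym2 ℕ)) : Prop :=
  ∃ a b c d : ℕ, a < b ∧ b < c ∧ c < d ∧ s(a, d) ∈ Γ ∧ s(b, c) ∈ Γ ∧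
    (∀ v w : ℕ, a < v → v < b → s(v, w) ∈ Γ → c < w) ∧
    Γ' = insert s(a, c) (insert s(b, d) ((Γ.erase s(a, d)).erase s(b, c)))

/-- Type II(b) move. -/
def TypeIIb (Γ Γ' : Finset (Sym2 ℕ)) : Prop :=
  ∃ a b c d : ℕ, a < b ∧ b < c ∧ c < d ∧ s(a, c) ∈ Γ ∧ s(b, d) ∈ Γ ∧
    (∀ v w : ℕ, b < v → v < c → s(v, w) ∈ Γ → c < w) ∧
    Γ' = insert s(a, b) (insert s(c, d) ((Γ.erase s(a, c)).erase s(b, d)))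

/-- A single move of any type. -/
def MatchStep (Γ Γ' : Finset (Sym2 ℕ)) : Prop :=
  TypeIa Γ Γ' ∨ TypeIb Γ Γ' ∨ TypeIIa Γ Γ' ∨ TypeIIb Γ Γ'

/-- The partial order `⊑`: `Γ ⊑ Γ'` if `Γ'` is obtained from `Γ` by a finite
sequence of Type I and Type II moves. -/
def MatchLe : Finset (Sym2 ℕ) → Finset (Sym2 ℕ) → Prop :=
  Relation.ReflTransGen MatchStep

/-- `Γ` is an intertwined perfect matching on `{1,…,2n}` with matching data `e`:
`Γ` is a matching whose set of matched vertices is exactly `{1,…,2n}`, and for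
each `1 ≤ i ≤ n` the vertex `n+i` is matched to `e i ∈ {1,…,n}`. -/
def IsIntertwined (n : ℕ) (Γ : Finset (Sym2 ℕ)) (e : ℕ → ℕ) : Prop :=
  IsMatching Γ ∧
  (∀ v : ℕ, InMatch Γ v ↔ 1 ≤ v ∧ v ≤ 2 * n) ∧
  (∀ i : ℕ, 1 ≤ i → i ≤ n → 1 ≤ e i ∧ e i ≤ n ∧ s(e i, n + i) ∈ Γ)

/-- The word `w_Γ` of an intertwined perfect matching with matching data `e`:
the `j`-th letter (0-based) is `e (n − j)`, i.e. `w_Γ = e_n e_{n−1} ⋯ e_1`. -/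
def wd (n : ℕ) (e : ℕ → ℕ) : Fin n → ℕ := fun j => e (n - (j : ℕ))

/-- A single Type I move. -/
def TypeIStep (Γ Γ' : Finset (Sym2 ℕ)) : Prop := TypeIa Γ Γ' ∨ TypeIb Γ Γ'

namespace Stmt9

lemma sym2_exists (z : Sym2 ℕ) : ∃ a b, z = s(a, b) := by
  induction z using Sym2.ind with | _ a b => exact ⟨a, b, rfl⟩

/-- The embedding invariant. -/
def Embeds (Γ Γ' : Finset (Sym2 ℕ)) : Prop :=
  ∃ φ : ℕ → ℕ,
    (∀ v w, InMatch Γ v → InMatch Γ w → v < w → φ v < φ w) ∧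
    (∀ v, InMatch Γ v → v ≤ φ v) ∧
    (∀ a b, s(a, b) ∈ Γ → s(φ a, φ b) ∈ Γ')

lemma embeds_rfl (Γ : Finset (Sym2 ℕ)) : Embeds Γ Γ :=
  ⟨id, fun _ _ _ _ h => h, fun _ _ => le_rfl, fun _ _ h => h⟩

lemma embeds_trans {Γ Δ Γ' : Finset (Sym2 ℕ)} (h1 : Embeds Γ Δ) (h2 : Embeds Δ Γ') :
    Embeds Γ Γ' := by
  obtain ⟨φ, hm, hd, he⟩ := h1
  obtain ⟨ψ, hm', hd', he'⟩ := h2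
  have himg : ∀ v, InMatch Γ v → InMatch Δ (φ v) := by
    rintro v ⟨f, hf, hvf⟩
    obtain ⟨u, rfl⟩ := Sym2.mem_iff_exists.1 hvf
    exact ⟨s(φ v, φ u), he _ _ hf, Sym2.mem_mk_left _ _⟩
  refine ⟨ψ ∘ φ, ?_, ?_, ?_⟩
  · intro v w hv hw hvw
    exact hm' _ _ (himg v hv) (himg w hw) (hm _ _ hv hw hvw)
  · intro v hv
    exact le_trans (hd v hv) (hd' _ (himg v hv))
  · intro a b hab
    exact he' _ _ (he _ _ hab)

lemma matching_step {Γ Γ' : Finset (Sym2 ℕ)} (hM : IsMatching Γ) (h : TypeIStep Γ Γ') :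
    IsMatching Γ' := by
  obtain ⟨hd, hdis⟩ := hM
  rcases h with ⟨i, j, hij, hi, hj, rfl⟩ | ⟨i, j, hmem, hj1, rfl⟩
  · constructor
    · intro f hf
      rcases Finset.mem_insert.1 hf with rfl | hf
      · simpa [Sym2.mk_isDiag_iff] using hij
      · exact hd f hf
    · intro f hf g hg hfg v hvf hvg
      rcases Finset.mem_insert.1 hf with rfl | hf <;> rcases Finset.mem_insert.1 hg with rfl | hg
      · exact hfg rfl
      · rcases Sym2.mem_iff.1 hvf with h | h
        · exact hi ⟨g, hg, h ▸ hvg⟩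
        · exact hj ⟨g, hg, h ▸ hvg⟩
      · rcases Sym2.mem_iff.1 hvg with h | h
        · exact hi ⟨f, hf, h ▸ hvf⟩
        · exact hj ⟨f, hf, h ▸ hvf⟩
      · exact hdis f hf g hg hfg v hvf hvg
  · have hinew : i ≠ j + 1 := by
      intro hcon
      refine hj1 ⟨s(i, j), hmem, ?_⟩
      rw [← hcon]
      exact Sym2.mem_mk_left _ _
    constructor
    · intro f hf
      rcases Finset.mem_insert.1 hf with rfl | hf
      · simpa [Sym2.mk_isDiag_iff] using hinew
      · exact hd f (Finset.mem_of_mem_erase hf)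
    · intro f hf g hg hfg v hvf hvg
      have key : ∀ w, w ∈ s(i, j + 1) → ∀ g' ∈ Γ.erase s(i, j), w ∉ g' := by
        intro w hw g' hg' hwg'
        have hg'Γ := Finset.mem_of_mem_erase hg'
        have hg'ne := Finset.ne_of_mem_erase hg'
        rcases Sym2.mem_iff.1 hw with h | h
        · exact hdis s(i, j) hmem g' hg'Γ (Ne.symm hg'ne) w (by rw [h]; exact Sym2.mem_mk_left _ _) hwg'
        · exact hj1 ⟨g', hg'Γ, h ▸ hwg'⟩
      rcases Finset.mem_insert.1 hf with rfl | hf <;> rcases Finset.mem_insert.1 hg with rfl | hg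
      · exact hfg rfl
      · exact key v hvf g hg hvg
      · exact key v hvg f hf hvf
      · exact hdis f (Finset.mem_of_mem_erase hf) g (Finset.mem_of_mem_erase hg) hfg v hvf hvg

lemma embeds_of_step {Γ Γ' : Finset (Sym2 ℕ)} (hM : IsMatching Γ) (h : TypeIStep Γ Γ') :
    Embeds Γ Γ' := by
  rcases h with ⟨i, j, hij, hi, hj, rfl⟩ | ⟨i, j, hmem, hj1, rfl⟩
  · exact ⟨id, fun _ _ _ _ h => h, fun _ _ => le_rfl,
      fun a b hab => Finset.mem_insert_of_mem hab⟩
  · have hijne : i ≠ j := by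
      intro hcon
      exact hM.1 _ hmem (by simpa [Sym2.mk_isDiag_iff] using hcon)
    refine ⟨fun x => if x = j then j + 1 else x, ?_, ?_, ?_⟩
    · intro v w hv hw hvw
      by_cases hvj : v = j <;> by_cases hwj : w = j
      · omega
      · have hw1 : w ≠ j + 1 := fun hcon => hj1 (hcon ▸ hw)
        simp only [if_pos hvj, if_neg hwj]
        omega
      · simp only [if_neg hvj, if_pos hwj]
        omega
      · simp only [if_neg hvj, if_neg hwj]
        exact hvw
    · intro v _
      dsimp only
      split <;> omega
    · intro a b hab
      by_cases hE : s(a, b) = s(i, j)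
      · rcases Sym2.eq_iff.1 hE with ⟨rfl, rfl⟩ | ⟨rfl, rfl⟩
        · simp only [if_neg hijne, if_pos rfl]
          exact Finset.mem_insert_self _ _
        · simp only [if_neg hijne, if_pos rfl]
          rw [Sym2.eq_swap]
          exact Finset.mem_insert_self _ _
      · have hja : a ≠ j := by
          rintro rfl
          exact hM.2 _ hab _ hmem hE a (Sym2.mem_mk_left _ _) (Sym2.mem_mk_right _ _)
        have hjb : b ≠ j := by
          rintro rfl
          exact hM.2 _ hab _ hmem hE b (Sym2.mem_mk_right _ _) (Sym2.mem_mk_right _ _)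
        simp only [if_neg hja, if_neg hjb]
        exact Finset.mem_insert_of_mem (Finset.mem_erase.2 ⟨hE, hab⟩)

lemma reach_embeds {Γ Γ' : Finset (Sym2 ℕ)} (hM : IsMatching Γ)
    (h : Relation.ReflTransGen TypeIStep Γ Γ') : Embeds Γ Γ' := by
  induction h using Relation.ReflTransGen.head_induction_on with
  | refl => exact embeds_rfl Γ'
  | head hstep htail ih =>
      exact embeds_trans (embeds_of_step hM hstep) (ih (matching_step hM hstep))
  -- note: need to generalize hM; fix below if error

end Stmt9


namespace Stmt9

noncomputable section

open Classical

/-- Edge weight: total displacement of the two endpoints under `φ`. -/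
def ew (φ : ℕ → ℕ) : Sym2 ℕ → ℕ :=
  Sym2.lift ⟨fun a b => (φ a - a) + (φ b - b), fun a b => Nat.add_comm _ _⟩

lemma ew_mk (φ : ℕ → ℕ) (a b : ℕ) : ew φ s(a, b) = (φ a - a) + (φ b - b) := rfl

/-- Total measure. -/
def MM (Γ : Finset (Sym2 ℕ)) (φ : ℕ → ℕ) : ℕ := ∑ e ∈ Γ, ew φ e

def pairF : Sym2 ℕ → Finset ℕ :=
  Sym2.lift ⟨fun a b => {a, b}, fun a b => Finset.pair_comm a b⟩

lemma mem_pairF {v : ℕ} {e : Sym2 ℕ} : v ∈ pairF e ↔ v ∈ e := by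
  induction e using Sym2.ind with | _ a b =>
  show v ∈ ({a, b} : Finset ℕ) ↔ _
  simp [Sym2.mem_iff]

def vertsF (Γ : Finset (Sym2 ℕ)) : Finset ℕ := Γ.sup pairF

lemma mem_vertsF {v : ℕ} {Γ : Finset (Sym2 ℕ)} : v ∈ vertsF Γ ↔ InMatch Γ v := by
  simp [vertsF, Finset.mem_sup, mem_pairF, InMatch]

lemma reach_image : ∀ (N : ℕ) (Γ : Finset (Sym2 ℕ)) (φ : ℕ → ℕ), IsMatching Γ →
    (∀ v w, InMatch Γ v → InMatch Γ w → v < w → φ v < φ w) →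
    (∀ v, InMatch Γ v → v ≤ φ v) →
    MM Γ φ ≤ N →
    Relation.ReflTransGen TypeIStep Γ (Γ.image (Sym2.map φ)) := by
  intro N
  induction N using Nat.strong_induction_on with
  | _ N ih =>
  intro Γ φ hM hmono hdom hMM
  by_cases hB : ((vertsF Γ).filter (fun v => v < φ v)).Nonempty
  · -- pick the largest displaced vertex
    set B := (vertsF Γ).filter (fun v => v < φ v) with hBdef
    set v := B.max' hB with hvdef
    have hvB : v ∈ B := B.max'_mem hB
    have hvV : InMatch Γ v := mem_vertsF.1 (Finset.mem_of_mem_filter _ hvB)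
    have hvlt : v < φ v := (Finset.mem_filter.1 hvB).2
    -- partner
    obtain ⟨f, hf, hvf⟩ := id hvV
    obtain ⟨u, hfu⟩ := Sym2.mem_iff_exists.1 hvf
    have huv : s(u, v) ∈ Γ := by rw [Sym2.eq_swap, ← hfu]; exact hf
    have huV : InMatch Γ u := ⟨s(u, v), huv, Sym2.mem_mk_left _ _⟩
    have hune : u ≠ v := by
      intro hcon
      exact hM.1 _ huv (by simpa [Sym2.mk_isDiag_iff] using hcon)
    -- v+1 is free
    have hfree : ¬ InMatch Γ (v + 1) := by
      intro hcon
      have h1 : v + 1 ∈ vertsF Γ := mem_vertsF.2 hcon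
      have h2 : ¬ (v + 1 < φ (v + 1)) := by
        intro hlt
        have : v + 1 ∈ B := Finset.mem_filter.2 ⟨h1, hlt⟩
        have := B.le_max' _ this
        omega
      have h3 : φ v < φ (v + 1) := hmono _ _ hvV hcon (by omega)
      omega
    set Γ₁ := insert s(u, v + 1) (Γ.erase s(u, v)) with hΓ₁
    have hstep : TypeIStep Γ Γ₁ := Or.inr ⟨u, v, huv, hfree, rfl⟩
    have hM1 : IsMatching Γ₁ := matching_step hM hstep
    set φ₁ : ℕ → ℕ := fun x => if x = v + 1 then φ v else φ x with hφ₁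
    have hunew : u ≠ v + 1 := by
      intro hcon
      exact hfree (hcon ▸ huV)
    -- membership characterization of Γ₁ vertices
    have hIn1 : ∀ x, InMatch Γ₁ x → x = v + 1 ∨ (InMatch Γ x ∧ x ≠ v) := by
      rintro x ⟨g, hg, hxg⟩
      rcases Finset.mem_insert.1 hg with rfl | hg
      · rcases Sym2.mem_iff.1 hxg with h | h
        · exact Or.inr ⟨h ▸ huV, by omega⟩
        · exact Or.inl h
      · have hgΓ := Finset.mem_of_mem_erase hg
        have hgne := Finset.ne_of_mem_erase hg
        refine Or.inr ⟨⟨g, hgΓ, hxg⟩, ?_⟩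
        rintro rfl
        exact hM.2 _ huv _ hgΓ (Ne.symm hgne) v (Sym2.mem_mk_right _ _) hxg
    have hnotm1 : ∀ x, InMatch Γ₁ x → x ≠ v + 1 → φ₁ x = φ x := by
      intro x _ hx
      simp [hφ₁, hx]
    have hmono1 : ∀ x y, InMatch Γ₁ x → InMatch Γ₁ y → x < y → φ₁ x < φ₁ y := by
      intro x y hx hy hxy
      rcases hIn1 x hx with rfl | ⟨hxV, hxv⟩ <;> rcases hIn1 y hy with h | ⟨hyV, hyv⟩
      · omega
      · -- x = v+1, y ∈ V Γ, y > v+1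
        have h1 : φ₁ (v + 1) = φ v := by simp [hφ₁]
        have h2 : φ₁ y = φ y := by simp [hφ₁, show y ≠ v + 1 by omega]
        have h3 : φ v < φ y := hmono _ _ hvV hyV (by omega)
        omega
      · -- y = v + 1, x ∈ V Γ, x < v+1, x ≠ v so x < v
        subst h
        have h1 : φ₁ (v + 1) = φ v := by simp [hφ₁]
        have h2 : φ₁ x = φ x := by simp [hφ₁, show x ≠ v + 1 by omega]
        have h3 : φ x < φ v := hmono _ _ hxV hvV (by omega)
        omega
      · have h1 : φ₁ x = φ x := by
          simp [hφ₁, show x ≠ v + 1 from fun hc => hfree (hc ▸ hxV)]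
        have h2 : φ₁ y = φ y := by
          simp [hφ₁, show y ≠ v + 1 from fun hc => hfree (hc ▸ hyV)]
        have := hmono _ _ hxV hyV hxy
        omega
    have hdom1 : ∀ x, InMatch Γ₁ x → x ≤ φ₁ x := by
      intro x hx
      rcases hIn1 x hx with rfl | ⟨hxV, _⟩
      · simp only [hφ₁, if_pos rfl]
        omega
      · have := hdom x hxV
        have hxne : x ≠ v + 1 := fun hc => hfree (hc ▸ hxV)
        simp only [hφ₁, if_neg hxne]
        omega
    -- edges of erase don't contain v+1
    have herase : ∀ g ∈ Γ.erase s(u, v), Sym2.map φ₁ g = Sym2.map φ g ∧ ew φ₁ g = ew φ g := by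
      intro g hg
      have hgΓ := Finset.mem_of_mem_erase hg
      obtain ⟨a, b, rfl⟩ := sym2_exists g
      have ha : a ≠ v + 1 := fun hc => hfree ⟨_, hgΓ, hc ▸ Sym2.mem_mk_left a b⟩
      have hb : b ≠ v + 1 := fun hc => hfree ⟨_, hgΓ, hc ▸ Sym2.mem_mk_right a b⟩
      constructor
      · rw [Sym2.map_pair_eq, Sym2.map_pair_eq]
        simp [hφ₁, ha, hb]
      · rw [ew_mk, ew_mk]
        simp [hφ₁, ha, hb]
    have hnot1 : s(u, v + 1) ∉ Γ.erase s(u, v) := by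
      intro hc
      exact hfree ⟨_, Finset.mem_of_mem_erase hc, Sym2.mem_mk_right _ _⟩
    -- measure decreases
    have hMM1 : MM Γ₁ φ₁ < MM Γ φ := by
      have e1 : MM Γ₁ φ₁ = ew φ₁ s(u, v + 1) + ∑ g ∈ Γ.erase s(u, v), ew φ₁ g :=
        Finset.sum_insert hnot1
      have e2 : ∑ g ∈ Γ.erase s(u, v), ew φ₁ g = ∑ g ∈ Γ.erase s(u, v), ew φ g :=
        Finset.sum_congr rfl (fun g hg => (herase g hg).2)
      have e3 : ew φ s(u, v) + ∑ g ∈ Γ.erase s(u, v), ew φ g = MM Γ φ :=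
        Finset.add_sum_erase _ _ huv
      have e4 : ew φ₁ s(u, v + 1) = (φ u - u) + (φ v - (v + 1)) := by
        rw [ew_mk]
        simp [hφ₁, hunew]
      have e5 : ew φ s(u, v) = (φ u - u) + (φ v - v) := rfl
      omega
    have himg : Γ₁.image (Sym2.map φ₁) = Γ.image (Sym2.map φ) := by
      have h2 : Γ₁.image (Sym2.map φ₁)
          = insert s(φ u, φ v) ((Γ.erase s(u, v)).image (Sym2.map φ)) := by
        rw [hΓ₁, Finset.image_insert]
        have : Sym2.map φ₁ s(u, v + 1) = s(φ u, φ v) := by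
          rw [Sym2.map_pair_eq]
          simp [hφ₁, hunew]
        rw [this, Finset.image_congr (fun g hg => (herase g hg).1)]
      have h3 : Γ.image (Sym2.map φ)
          = insert s(φ u, φ v) ((Γ.erase s(u, v)).image (Sym2.map φ)) := by
        conv_lhs => rw [← Finset.insert_erase huv]
        rw [Finset.image_insert, Sym2.map_pair_eq]
      rw [h2, h3]
    have htail : Relation.ReflTransGen TypeIStep Γ₁ (Γ₁.image (Sym2.map φ₁)) :=
      ih (MM Γ₁ φ₁) (by omega) Γ₁ φ₁ hM1 hmono1 hdom1 le_rfl
    rw [himg] at htail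
    exact Relation.ReflTransGen.head hstep htail
  · -- φ is the identity on the vertices
    have hid : ∀ x, InMatch Γ x → φ x = x := by
      intro x hx
      have h1 : x ∉ (vertsF Γ).filter (fun v => v < φ v) := fun hc => hB ⟨x, hc⟩
      have h2 : x ∈ vertsF Γ := mem_vertsF.2 hx
      have := hdom x hx
      have : ¬ (x < φ x) := fun hlt => h1 (Finset.mem_filter.2 ⟨h2, hlt⟩)
      omega
    have : Γ.image (Sym2.map φ) = Γ := by
      have h1 : ∀ g ∈ Γ, Sym2.map φ g = g := by
        intro g hg
        obtain ⟨a, b, rfl⟩ := sym2_exists g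
        rw [Sym2.map_pair_eq, hid a ⟨_, hg, Sym2.mem_mk_left a b⟩,
          hid b ⟨_, hg, Sym2.mem_mk_right a b⟩]
      calc Γ.image (Sym2.map φ) = Γ.image id := Finset.image_congr (fun g hg => h1 g hg)
        _ = Γ := Finset.image_id
    rw [this]

lemma subset_reach : ∀ (N : ℕ) (Δ Γ' : Finset (Sym2 ℕ)), IsMatching Γ' → Δ ⊆ Γ' →
    (Γ' \ Δ).card ≤ N → Relation.ReflTransGen TypeIStep Δ Γ' := by
  intro N
  induction N using Nat.strong_induction_on with
  | _ N ih =>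
  intro Δ Γ' hM' hsub hcard
  by_cases h : Γ' ⊆ Δ
  · rw [Finset.Subset.antisymm hsub h]
  · obtain ⟨E, hEΓ', hEΔ⟩ := Finset.exists_of_ssubset (Finset.ssubset_iff_subset_ne.2
      ⟨hsub, fun hc => h (hc ▸ le_refl _)⟩)
    obtain ⟨a, b, rfl⟩ := sym2_exists E
    have hab : a ≠ b := by
      intro hc
      exact hM'.1 _ hEΓ' (by simpa [Sym2.mk_isDiag_iff] using hc)
    have hfree : ∀ x, x ∈ s(a, b) → ¬ InMatch Δ x := by
      rintro x hx ⟨f, hf, hxf⟩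
      exact hM'.2 _ hEΓ' f (hsub hf) (fun hc => hEΔ (hc ▸ hf)) x hx hxf
    have hstep : TypeIStep Δ (insert s(a, b) Δ) :=
      Or.inl ⟨a, b, hab, hfree a (Sym2.mem_mk_left _ _), hfree b (Sym2.mem_mk_right _ _), rfl⟩
    have hE' : s(a, b) ∈ Γ' \ Δ := Finset.mem_sdiff.2 ⟨hEΓ', hEΔ⟩
    have hcard1 : (Γ' \ insert s(a, b) Δ).card < (Γ' \ Δ).card := by
      rw [Finset.sdiff_insert]
      exact Finset.card_erase_lt_of_mem hE'
    have h1 : (Γ' \ Δ).card ≠ 0 := Finset.card_ne_zero_of_mem hE'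
    refine Relation.ReflTransGen.head hstep ?_
    exact ih (Γ' \ insert s(a, b) Δ).card (by omega) _ _ hM'
      (Finset.insert_subset hEΓ' hsub) le_rfl

lemma embeds_reach {Γ Γ' : Finset (Sym2 ℕ)} (hM : IsMatching Γ) (hM' : IsMatching Γ')
    (h : Embeds Γ Γ') : Relation.ReflTransGen TypeIStep Γ Γ' := by
  obtain ⟨φ, hmono, hdom, hedge⟩ := h
  have h1 : Relation.ReflTransGen TypeIStep Γ (Γ.image (Sym2.map φ)) :=
    reach_image (MM Γ φ) Γ φ hM hmono hdom le_rfl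
  have hsub : Γ.image (Sym2.map φ) ⊆ Γ' := by
    intro E hE
    obtain ⟨g, hg, rfl⟩ := Finset.mem_image.1 hE
    obtain ⟨a, b, rfl⟩ := sym2_exists g
    rw [Sym2.map_pair_eq]
    exact hedge a b hg
  exact h1.trans (subset_reach _ _ _ hM' hsub le_rfl)

end

end Stmt9

namespace Stmt9

variable {n : ℕ} {Γ : Finset (Sym2 ℕ)} {e : ℕ → ℕ}

lemma intertwined_inj (h : IsIntertwined n Γ e) :
    ∀ i j, 1 ≤ i → i ≤ n → 1 ≤ j → j ≤ n → e i = e j → i = j := by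
  intro i j hi1 hin hj1 hjn hij
  by_contra hne
  obtain ⟨_, _, hEi⟩ := h.2.2 i hi1 hin
  obtain ⟨_, _, hEj⟩ := h.2.2 j hj1 hjn
  have hEne : s(e i, n + i) ≠ s(e j, n + j) := by
    intro hc
    rcases Sym2.eq_iff.1 hc with ⟨_, h2⟩ | ⟨h1, _⟩
    · omega
    · have := h.2.2 i hi1 hin
      omega
  exact h.1.2 _ hEi _ hEj hEne (e i) (Sym2.mem_mk_left _ _)
    (by rw [hij]; exact Sym2.mem_mk_left _ _)

lemma intertwined_surj (h : IsIntertwined n Γ e) :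
    ∀ b, 1 ≤ b → b ≤ n → ∃ i, (1 ≤ i ∧ i ≤ n) ∧ e i = b := by
  intro b hb1 hbn
  have := Finset.surj_on_of_inj_on_of_card_le (s := Finset.Icc 1 n) (t := Finset.Icc 1 n)
    (fun a _ => e a)
    (by
      intro a ha
      rw [Finset.mem_Icc] at *
      exact ⟨(h.2.2 a ha.1 ha.2).1, (h.2.2 a ha.1 ha.2).2.1⟩)
    (by
      intro a1 a2 ha1 ha2 heq
      rw [Finset.mem_Icc] at *
      exact intertwined_inj h a1 a2 ha1.1 ha1.2 ha2.1 ha2.2 heq)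
    le_rfl
  obtain ⟨i, hi, hei⟩ := this b (Finset.mem_Icc.2 ⟨hb1, hbn⟩)
  rw [Finset.mem_Icc] at hi
  exact ⟨i, hi, hei.symm⟩

lemma intertwined_edges (h : IsIntertwined n Γ e) :
    ∀ E ∈ Γ, ∃ k, 1 ≤ k ∧ k ≤ n ∧ E = s(e k, n + k) := by
  intro E hE
  obtain ⟨a, b, rfl⟩ := sym2_exists E
  have haV : InMatch Γ a := ⟨_, hE, Sym2.mem_mk_left a b⟩
  have hab := (h.2.1 a).1 haV
  have key : ∃ k, (1 ≤ k ∧ k ≤ n) ∧ a ∈ s(e k, n + k) := by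
    by_cases han : a ≤ n
    · obtain ⟨k, hk, hek⟩ := intertwined_surj h a hab.1 han
      exact ⟨k, hk, by rw [hek]; exact Sym2.mem_mk_left _ _⟩
    · refine ⟨a - n, by omega, ?_⟩
      have : n + (a - n) = a := by omega
      rw [this]
      exact Sym2.mem_mk_right _ _
  obtain ⟨k, hk, hak⟩ := key
  obtain ⟨_, _, hEk⟩ := h.2.2 k hk.1 hk.2
  refine ⟨k, hk.1, hk.2, ?_⟩
  by_contra hne
  exact h.1.2 _ hE _ hEk hne a (Sym2.mem_mk_left a b) hak

end Stmt9


namespace Stmt9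

variable {m : ℕ} {Γ' : Finset (Sym2 ℕ)} {e' : ℕ → ℕ}

lemma embeds_to_g (hn : 1 ≤ n) (hm : 1 ≤ m)
    (hΓ : IsIntertwined n Γ e) (hΓ' : IsIntertwined m Γ' e') (hE : Embeds Γ Γ') :
    ∃ g : Fin n → Fin m, StrictMono g ∧
      (∀ j : Fin n, wd n e j ≤ wd m e' (g j)) ∧
      (∀ j k : Fin n, wd n e j < wd n e k ↔ wd m e' (g j) < wd m e' (g k)) := by
  obtain ⟨φ, hmono, hdom, hedge⟩ := hE
  have hVΓ := hΓ.2.1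
  have key : ∀ i, 1 ≤ i → i ≤ n →
      ∃ k, 1 ≤ k ∧ k ≤ m ∧ φ (n + i) = m + k ∧ φ (e i) = e' k := by
    intro i hi1 hin
    obtain ⟨he1, he2, hEdge⟩ := hΓ.2.2 i hi1 hin
    have himg : s(φ (e i), φ (n + i)) ∈ Γ' := hedge _ _ hEdge
    obtain ⟨k, hk1, hkm, hEq⟩ := intertwined_edges hΓ' _ himg
    have hlt : φ (e i) < φ (n + i) :=
      hmono _ _ ((hVΓ (e i)).2 (by omega)) ((hVΓ (n + i)).2 (by omega)) (by omega)
    have he'k := (hΓ'.2.2 k hk1 hkm).1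
    have he'k2 := (hΓ'.2.2 k hk1 hkm).2.1
    rcases Sym2.eq_iff.1 hEq with ⟨h1, h2⟩ | ⟨h1, h2⟩
    · exact ⟨k, hk1, hkm, h2, h1⟩
    · omega
  set K : Fin n → ℕ := fun j => φ (n + (n - (j : ℕ))) - m with hKdef
  have hK : ∀ j : Fin n, 1 ≤ K j ∧ K j ≤ m ∧ φ (n + (n - (j : ℕ))) = m + K j ∧
      φ (e (n - (j : ℕ))) = e' (K j) := by
    intro j
    obtain ⟨k, h1, h2, h3, h4⟩ := key (n - (j : ℕ)) (by omega) (by omega)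
    have hKj : K j = k := by simp only [hKdef]; omega
    rw [hKj]
    exact ⟨h1, h2, h3, h4⟩
  refine ⟨fun j => ⟨m - K j, by have := (hK j).1; omega⟩, ?_, ?_, ?_⟩
  · intro j k hjk
    have hjv : (j : ℕ) < (k : ℕ) := hjk
    have hkn := k.isLt
    have h1 : φ (n + (n - (k : ℕ))) < φ (n + (n - (j : ℕ))) :=
      hmono _ _ ((hVΓ _).2 (by omega)) ((hVΓ _).2 (by omega)) (by omega)
    have h2 := (hK j).2.2.1
    have h3 := (hK k).2.2.1
    have h4 := (hK j).2.1
    have h5 := (hK k).2.1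
    show m - K j < m - K k
    omega
  · intro j
    have h1 : wd m e' ⟨m - K j, by have := (hK j).1; omega⟩ = e' (K j) := by
      show e' (m - (m - K j)) = e' (K j)
      congr 1
      have := (hK j).1
      have := (hK j).2.1
      omega
    rw [h1, ← (hK j).2.2.2]
    exact hdom _ ((hVΓ (e (n - (j : ℕ)))).2 (by
      have := (hΓ.2.2 (n - (j : ℕ)) (by omega) (by omega)).1
      have := (hΓ.2.2 (n - (j : ℕ)) (by omega) (by omega)).2.1
      omega))
  · intro j k
    have hwj : wd m e' ⟨m - K j, by have := (hK j).1; omega⟩ = e' (K j) := by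
      show e' (m - (m - K j)) = e' (K j)
      congr 1
      have := (hK j).1; have := (hK j).2.1; omega
    have hwk : wd m e' ⟨m - K k, by have := (hK k).1; omega⟩ = e' (K k) := by
      show e' (m - (m - K k)) = e' (K k)
      congr 1
      have := (hK k).1; have := (hK k).2.1; omega
    rw [hwj, hwk, ← (hK j).2.2.2, ← (hK k).2.2.2]
    have hjV : InMatch Γ (e (n - (j : ℕ))) := (hVΓ _).2 (by
      have := (hΓ.2.2 (n - (j : ℕ)) (by omega) (by omega)).1
      have := (hΓ.2.2 (n - (j : ℕ)) (by omega) (by omega)).2.1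
      omega)
    have hkV : InMatch Γ (e (n - (k : ℕ))) := (hVΓ _).2 (by
      have := (hΓ.2.2 (n - (k : ℕ)) (by omega) (by omega)).1
      have := (hΓ.2.2 (n - (k : ℕ)) (by omega) (by omega)).2.1
      omega)
    show e (n - (j : ℕ)) < e (n - (k : ℕ)) ↔ _
    constructor
    · exact fun h => hmono _ _ hjV hkV h
    · intro h
      rcases lt_trichotomy (e (n - (j : ℕ))) (e (n - (k : ℕ))) with h' | h' | h'
      · exact h'
      · rw [h'] at h; omega
      · have := hmono _ _ hkV hjV h'
        omega

lemma g_to_embeds (hn : 1 ≤ n) (hm : 1 ≤ m)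
    (hΓ : IsIntertwined n Γ e) (hΓ' : IsIntertwined m Γ' e')
    (g : Fin n → Fin m) (hg : StrictMono g)
    (hdom : ∀ j : Fin n, wd n e j ≤ wd m e' (g j))
    (hiso : ∀ j k : Fin n, wd n e j < wd n e k ↔ wd m e' (g j) < wd m e' (g k)) :
    Embeds Γ Γ' := by
  classical
  have hVΓ := hΓ.2.1
  have hnm : n ≤ m := by
    have := Fintype.card_le_of_injective g hg.injective
    simpa using this
  have he'b : ∀ k, 1 ≤ k → k ≤ m → 1 ≤ e' k ∧ e' k ≤ m :=
    fun k h1 h2 => ⟨(hΓ'.2.2 k h1 h2).1, (hΓ'.2.2 k h1 h2).2.1⟩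
  have heb : ∀ k, 1 ≤ k → k ≤ n → 1 ≤ e k ∧ e k ≤ n :=
    fun k h1 h2 => ⟨(hΓ.2.2 k h1 h2).1, (hΓ.2.2 k h1 h2).2.1⟩
  set K : ℕ → ℕ := fun i => if h : 1 ≤ i ∧ i ≤ n then m - (g ⟨n - i, by omega⟩ : ℕ) else 0
    with hKdef
  have hKval : ∀ i (h1 : 1 ≤ i) (h2 : i ≤ n), K i = m - (g ⟨n - i, by omega⟩ : ℕ) :=
    fun i h1 h2 => dif_pos ⟨h1, h2⟩
  have hwd : ∀ i (h1 : 1 ≤ i) (h2 : i ≤ n), wd n e ⟨n - i, by omega⟩ = e i := by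
    intro i h1 h2
    show e (n - (n - i)) = e i
    congr 1
    omega
  have hwd' : ∀ i (h1 : 1 ≤ i) (h2 : i ≤ n),
      wd m e' (g ⟨n - i, by omega⟩) = e' (K i) := by
    intro i h1 h2
    show e' (m - _) = e' (K i)
    rw [hKval i h1 h2]
  have hKb : ∀ i, 1 ≤ i → i ≤ n → 1 ≤ K i ∧ K i ≤ m := by
    intro i h1 h2
    rw [hKval i h1 h2]
    have := (g ⟨n - i, by omega⟩).isLt
    omega
  have hdom' : ∀ i, 1 ≤ i → i ≤ n → e i ≤ e' (K i) := by
    intro i h1 h2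
    have := hdom ⟨n - i, by omega⟩
    rwa [hwd i h1 h2, hwd' i h1 h2] at this
  have hiso' : ∀ i i', 1 ≤ i → i ≤ n → 1 ≤ i' → i' ≤ n →
      (e i < e i' ↔ e' (K i) < e' (K i')) := by
    intro i i' h1 h2 h3 h4
    have := hiso ⟨n - i, by omega⟩ ⟨n - i', by omega⟩
    rwa [hwd i h1 h2, hwd' i h1 h2, hwd i' h3 h4, hwd' i' h3 h4] at this
  have hKmono : ∀ i i', 1 ≤ i → i' ≤ n → i < i' → K i < K i' := by
    intro i i' h1 h2 hlt
    have hj : (⟨n - i', by omega⟩ : Fin n) < ⟨n - i, by omega⟩ := by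
      show n - i' < n - i
      omega
    have := hg hj
    have hval : (g ⟨n - i', by omega⟩ : ℕ) < (g ⟨n - i, by omega⟩ : ℕ) := this
    have hlt2 := (g ⟨n - i, by omega⟩).isLt
    rw [hKval i h1 (by omega), hKval i' (by omega) h2]
    omega
  have hKge : ∀ i, 1 ≤ i → i ≤ n → i ≤ K i := by
    intro i
    induction i with
    | zero => omega
    | succ p ih =>
        intro _ h2
        by_cases hp : 1 ≤ p
        · have := ih hp (by omega)
          have := hKmono p (p + 1) hp h2 (by omega)
          omega
        · have : p = 0 := by omega
          subst this
          exact (hKb 1 le_rfl (by omega)).1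
  -- inverse of e
  set einv : ℕ → ℕ := fun v => if h : ∃ i, (1 ≤ i ∧ i ≤ n) ∧ e i = v then h.choose else 0
    with heinvdef
  have heinv : ∀ v, 1 ≤ v → v ≤ n → (1 ≤ einv v ∧ einv v ≤ n) ∧ e (einv v) = v := by
    intro v h1 h2
    have hex := intertwined_surj hΓ v h1 h2
    simp only [heinvdef, dif_pos hex]
    exact hex.choose_spec
  set φ : ℕ → ℕ := fun v => if v ≤ n then e' (K (einv v)) else m + K (v - n) with hφdef
  have hφlow : ∀ v, v ≤ n → φ v = e' (K (einv v)) := by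
    intro v hv
    simp [hφdef, if_pos hv]
  have hφhigh : ∀ v, n + 1 ≤ v → φ v = m + K (v - n) := by
    intro v hv
    simp only [hφdef]
    rw [if_neg (by omega)]
  refine ⟨φ, ?_, ?_, ?_⟩
  · -- strictly monotone on vertices
    intro v w hv hw hvw
    have hvb := (hVΓ v).1 hv
    have hwb := (hVΓ w).1 hw
    by_cases hv1 : v ≤ n <;> by_cases hw1 : w ≤ n
    · obtain ⟨hvr, hve⟩ := heinv v (by omega) hv1
      obtain ⟨hwr, hwe⟩ := heinv w (by omega) hw1
      rw [hφlow v hv1, hφlow w hw1]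
      exact (hiso' _ _ hvr.1 hvr.2 hwr.1 hwr.2).1 (by rw [hve, hwe]; exact hvw)
    · obtain ⟨hvr, _⟩ := heinv v (by omega) hv1
      have h1 := (hKb _ hvr.1 hvr.2)
      have h2 := he'b _ h1.1 h1.2
      rw [hφlow v hv1, hφhigh w (by omega)]
      have := (hKb (w - n) (by omega) (by omega)).1
      omega
    · omega
    · rw [hφhigh v (by omega), hφhigh w (by omega)]
      have := hKmono (v - n) (w - n) (by omega) (by omega) (by omega)
      omega
  · -- dominance
    intro v hv
    have hvb := (hVΓ v).1 hv
    by_cases hv1 : v ≤ n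
    · obtain ⟨hvr, hve⟩ := heinv v (by omega) hv1
      rw [hφlow v hv1]
      have := hdom' _ hvr.1 hvr.2
      omega
    · rw [hφhigh v (by omega)]
      have := hKge (v - n) (by omega) (by omega)
      omega
  · -- edges map to edges
    intro a b hab
    obtain ⟨k, hk1, hkn, hEq⟩ := intertwined_edges hΓ _ hab
    have hkb := heb k hk1 hkn
    have hφek : φ (e k) = e' (K k) := by
      rw [hφlow (e k) hkb.2]
      obtain ⟨hr, hee⟩ := heinv (e k) hkb.1 hkb.2
      have : einv (e k) = k := intertwined_inj hΓ _ _ hr.1 hr.2 hk1 hkn hee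
      rw [this]
    have hφnk : φ (n + k) = m + K k := by
      rw [hφhigh (n + k) (by omega)]
      congr 2
      omega
    have hKkb := hKb k hk1 hkn
    have htarget : s(e' (K k), m + K k) ∈ Γ' := (hΓ'.2.2 (K k) hKkb.1 hKkb.2).2.2
    rcases Sym2.eq_iff.1 hEq with ⟨h1, h2⟩ | ⟨h1, h2⟩
    · rw [h1, h2, hφek, hφnk]
      exact htarget
    · rw [h1, h2, hφek, hφnk, Sym2.eq_swap]
      exact htarget

end Stmt9

/-- An intertwined perfect matching `Γ` on `{1,…,2n}` (with
word `w_Γ = wd n e`) can be transformed into an intertwined perfect matching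
`Γ'` on `{1,…,2m}` (with word `w_{Γ'} = wd m e'`) by a finite sequence of
Type I moves if and only if `w_Γ` is order isomorphic to a subword of `w_{Γ'}`:
there are positions `g 0 < g 1 < ⋯` with `(w_{Γ'}) (g j) ≥ (w_Γ) j` for all `j`
and `(w_Γ) j < (w_Γ) k ↔ (w_{Γ'}) (g j) < (w_{Γ'}) (g k)` for all `j, k`. -/
theorem typeI_iff_order_isomorphic_subword (n m : ℕ) (hn : 1 ≤ n) (hm : 1 ≤ m)
    (Γ Γ' : Finset (Sym2 ℕ)) (e e' : ℕ → ℕ)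
    (hΓ : IsIntertwined n Γ e) (hΓ' : IsIntertwined m Γ' e') :
    Relation.ReflTransGen TypeIStep Γ Γ' ↔
      ∃ g : Fin n → Fin m, StrictMono g ∧
        (∀ j : Fin n, wd n e j ≤ wd m e' (g j)) ∧
        (∀ j k : Fin n, wd n e j < wd n e k ↔ wd m e' (g j) < wd m e' (g k)) := by
  constructor
  · intro h
    exact Stmt9.embeds_to_g hn hm hΓ hΓ' (Stmt9.reach_embeds hΓ.1 h)
  · rintro ⟨g, hg, hdomin, hiso⟩
    exact Stmt9.embeds_reach hΓ.1 hΓ'.1 (Stmt9.g_to_embeds hn hm hΓ hΓ' g hg hdomin hiso)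
end

section
/- Let Γ and Γ' be intertwined perfect matchings on {1,…,2n}. Then Γ' is obtained from Γ by a single Type II(a) move if and only if the word w_{Γ'} is obtained from w_Γ by swapping two letters a < b such that a occurs before b in w_Γ and every letter c with a < c < b occurs in w_Γ at a position before the position of b. -/
private lemma sym2_eq_aux {n x y u v : ℕ} (hx : x ≤ n ∨ x < y) (hu : u ≤ n) (hv : n < v)
    (h : s(x, y) = s(u, v)) : x = u ∧ y = v := by
  rw [Sym2.eq_iff] at h
  rcases h with ⟨h1, h2⟩ | ⟨h1, h2⟩
  · exact ⟨h1, h2⟩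
  · omega

private lemma shared_edge {Γ : Finset (Sym2 ℕ)} (hM : IsMatching Γ) {f g : Sym2 ℕ}
    (hf : f ∈ Γ) (hg : g ∈ Γ) (v : ℕ) (hvf : v ∈ f) (hvg : v ∈ g) : f = g := by
  by_contra hne
  exact hM.2 f hf g hg hne v hvf hvg

private lemma interw_inj {n : ℕ} {Γ : Finset (Sym2 ℕ)} {e : ℕ → ℕ}
    (h : IsIntertwined n Γ e) {i j : ℕ} (hi1 : 1 ≤ i) (hi2 : i ≤ n)
    (hj1 : 1 ≤ j) (hj2 : j ≤ n) (heq : e i = e j) : i = j := by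
  obtain ⟨_, hin, hiΓ⟩ := h.2.2 i hi1 hi2
  obtain ⟨_, hjn, hjΓ⟩ := h.2.2 j hj1 hj2
  have hfg : s(e i, n + i) = s(e j, n + j) :=
    shared_edge h.1 hiΓ hjΓ (e i) (by simp) (by rw [heq]; simp)
  have := sym2_eq_aux (Or.inl hin) hjn (by omega) hfg
  omega

private lemma interw_surj {n : ℕ} {Γ : Finset (Sym2 ℕ)} {e : ℕ → ℕ}
    (h : IsIntertwined n Γ e) {u : ℕ} (h1 : 1 ≤ u) (h2 : u ≤ n) :
    ∃ k, 1 ≤ k ∧ k ≤ n ∧ e k = u := by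
  classical
  have hinj : Set.InjOn e (Finset.Icc 1 n) := by
    intro i hi j hj hij
    simp only [Finset.coe_Icc, Set.mem_Icc] at hi hj
    exact interw_inj h hi.1 hi.2 hj.1 hj.2 hij
  have hsub : (Finset.Icc 1 n).image e ⊆ Finset.Icc 1 n := by
    intro x hx
    obtain ⟨k, hk, rfl⟩ := Finset.mem_image.mp hx
    rw [Finset.mem_Icc] at hk ⊢
    exact ⟨(h.2.2 k hk.1 hk.2).1, (h.2.2 k hk.1 hk.2).2.1⟩
  have hcard : (Finset.Icc 1 n).card ≤ ((Finset.Icc 1 n).image e).card := by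
    rw [Finset.card_image_of_injOn hinj]
  have heq := Finset.eq_of_subset_of_card_le hsub hcard
  have hu : u ∈ (Finset.Icc 1 n).image e := by
    rw [heq]; exact Finset.mem_Icc.mpr ⟨h1, h2⟩
  obtain ⟨k, hk, hke⟩ := Finset.mem_image.mp hu
  rw [Finset.mem_Icc] at hk
  exact ⟨k, hk.1, hk.2, hke⟩

private lemma interw_mem {n : ℕ} {Γ : Finset (Sym2 ℕ)} {e : ℕ → ℕ}
    (h : IsIntertwined n Γ e) (f : Sym2 ℕ) :
    f ∈ Γ ↔ ∃ k, 1 ≤ k ∧ k ≤ n ∧ f = s(e k, n + k) := by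
  constructor
  · intro hf
    induction f using Sym2.ind with
    | _ x y =>
      have hx : InMatch Γ x := ⟨_, hf, by simp⟩
      have hxr := (h.2.1 x).mp hx
      by_cases hxn : x ≤ n
      · obtain ⟨k, hk1, hk2, hke⟩ := interw_surj h (by omega) hxn
        have hek := (h.2.2 k hk1 hk2).2.2
        refine ⟨k, hk1, hk2, shared_edge h.1 hf hek x (by simp) ?_⟩
        rw [Sym2.mem_iff]; left; omega
      · have hk1 : 1 ≤ x - n := by omega
        have hk2 : x - n ≤ n := by omega
        have hek := (h.2.2 (x - n) hk1 hk2).2.2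
        refine ⟨x - n, hk1, hk2, shared_edge h.1 hf hek x (by simp) ?_⟩
        rw [Sym2.mem_iff]; right; omega
  · rintro ⟨k, hk1, hk2, rfl⟩
    exact (h.2.2 k hk1 hk2).2.2

/-- For intertwined perfect matchings `Γ, Γ'` on `{1,…,2n}`
(with words `wd n e` and `wd n e'`), `Γ'` is obtained from `Γ` by a single
Type II(a) move if and only if `w_{Γ'}` is obtained from `w_Γ` by swapping two
letters `a < b` such that `a` occurs before `b` in `w_Γ` and every letter `c`
with `a < c < b` occurs in `w_Γ` at a position before the position of `b`. -/
theorem typeIIa_iff_word_swap (n : ℕ)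
    (Γ Γ' : Finset (Sym2 ℕ)) (e e' : ℕ → ℕ)
    (hΓ : IsIntertwined n Γ e) (hΓ' : IsIntertwined n Γ' e') :
    TypeIIa Γ Γ' ↔
      ∃ ja jb : Fin n, ja < jb ∧ wd n e ja < wd n e jb ∧
        (∀ l : Fin n, wd n e ja < wd n e l → wd n e l < wd n e jb → l < jb) ∧
        wd n e' ja = wd n e jb ∧ wd n e' jb = wd n e ja ∧
        (∀ l : Fin n, l ≠ ja → l ≠ jb → wd n e' l = wd n e l) := by
  constructor
  · rintro ⟨a, b, c, d, hab, hbc, hcd, had, hbcΓ, hcond, hΓ'eq⟩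
    -- identify the indices
    obtain ⟨i, hi1, hi2, hadeq⟩ := (interw_mem hΓ _).mp had
    obtain ⟨j, hj1, hj2, hbceq⟩ := (interw_mem hΓ _).mp hbcΓ
    have hea := (hΓ.2.2 i hi1 hi2)
    have heb := (hΓ.2.2 j hj1 hj2)
    have had' : a = e i ∧ d = n + i := sym2_eq_aux (by omega) hea.2.1 (by omega) hadeq
    have hbc' : b = e j ∧ c = n + j := sym2_eq_aux (by omega) heb.2.1 (by omega) hbceq
    obtain ⟨ha, hd⟩ := had'
    obtain ⟨hb, hc⟩ := hbc'
    have hea1 : 1 ≤ e i := hea.1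
    have hea2 : e i ≤ n := hea.2.1
    have heb1 : 1 ≤ e j := heb.1
    have heb2 : e j ≤ n := heb.2.1
    have hji : j < i := by omega
    -- key: determine e'
    have key : ∀ k, 1 ≤ k → k ≤ n →
        (k = j ∧ e' k = a) ∨ (k = i ∧ e' k = b) ∨ (k ≠ i ∧ k ≠ j ∧ e' k = e k) := by
      intro k hk1 hk2
      have hmem : s(e' k, n + k) ∈ Γ' := (hΓ'.2.2 k hk1 hk2).2.2
      have he'k : e' k ≤ n := (hΓ'.2.2 k hk1 hk2).2.1
      rw [hΓ'eq] at hmem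
      rcases Finset.mem_insert.mp hmem with h1 | hmem
      · left
        have := sym2_eq_aux (Or.inl he'k) (by omega) (by omega) h1
        constructor <;> omega
      rcases Finset.mem_insert.mp hmem with h1 | hmem
      · right; left
        have := sym2_eq_aux (Or.inl he'k) (by omega) (by omega) h1
        constructor <;> omega
      · right; right
        have hne1 := Finset.ne_of_mem_erase hmem
        have hmem2 := Finset.mem_of_mem_erase hmem
        have hne2 := Finset.ne_of_mem_erase hmem2
        have hmem3 := Finset.mem_of_mem_erase hmem2
        obtain ⟨m, hm1, hm2, hmeq⟩ := (interw_mem hΓ _).mp hmem3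
        have hem := (hΓ.2.2 m hm1 hm2)
        have := sym2_eq_aux (Or.inl he'k) hem.2.1 (by omega) hmeq
        have hkm : k = m := by omega
        subst hkm
        refine ⟨?_, ?_, this.1⟩
        · rintro rfl
          exact hne2 (by rw [ha, hd]; exact hmeq)
        · rintro rfl
          exact hne1 (by rw [hb, hc]; exact hmeq)
    have he'j : e' j = a := by
      rcases key j hj1 hj2 with h | h | h
      · exact h.2
      · omega
      · omega
    have he'i : e' i = b := by
      rcases key i hi1 hi2 with h | h | h
      · omega
      · exact h.2
      · omega
    refine ⟨⟨n - i, by omega⟩, ⟨n - j, by omega⟩, ?_, ?_, ?_, ?_, ?_, ?_⟩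
    · simp only [Fin.mk_lt_mk]; omega
    · simp only [wd]
      have h1 : n - (n - i) = i := by omega
      have h2 : n - (n - j) = j := by omega
      rw [h1, h2, ← ha, ← hb]; exact hab
    · intro l hl1 hl2
      simp only [wd] at hl1 hl2 ⊢
      have h1 : n - (n - i) = i := by omega
      have h2 : n - (n - j) = j := by omega
      rw [h1] at hl1; rw [h2] at hl2
      have hln : (l : ℕ) < n := l.isLt
      have hm1 : 1 ≤ n - (l : ℕ) := by omega
      have hm2 : n - (l : ℕ) ≤ n := by omega
      have hmem := (hΓ.2.2 (n - (l : ℕ)) hm1 hm2).2.2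
      have := hcond (e (n - (l : ℕ))) (n + (n - (l : ℕ)))
        (by omega) (by omega) hmem
      show (l : ℕ) < n - j
      omega
    · simp only [wd]
      have h1 : n - (n - i) = i := by omega
      have h2 : n - (n - j) = j := by omega
      rw [h1, h2, he'i, hb]
    · simp only [wd]
      have h1 : n - (n - i) = i := by omega
      have h2 : n - (n - j) = j := by omega
      rw [h1, h2, he'j, ha]
    · intro l hl1 hl2
      simp only [wd]
      have hln : (l : ℕ) < n := l.isLt
      have hm1 : 1 ≤ n - (l : ℕ) := by omega
      have hm2 : n - (l : ℕ) ≤ n := by omega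
      have hmi : n - (l : ℕ) ≠ i := by
        intro hh
        exact hl1 (Fin.ext (show (l : ℕ) = n - i by omega))
      have hmj : n - (l : ℕ) ≠ j := by
        intro hh
        exact hl2 (Fin.ext (show (l : ℕ) = n - j by omega))
      rcases key (n - (l : ℕ)) hm1 hm2 with h | h | h
      · omega
      · omega
      · exact h.2.2
  · rintro ⟨ja, jb, hlt, hword, hcond, h4, h5, h6⟩
    have hja : (ja : ℕ) < n := ja.isLt
    have hjb : (jb : ℕ) < n := jb.isLt
    set p := n - (ja : ℕ) with hp
    set q := n - (jb : ℕ) with hq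
    have hp1 : 1 ≤ p := by omega
    have hp2 : p ≤ n := by omega
    have hq1 : 1 ≤ q := by omega
    have hq2 : q ≤ n := by omega
    have hqp : q < p := by
      have : (ja : ℕ) < (jb : ℕ) := hlt
      omega
    simp only [wd] at hword h4 h5
    -- a = e p, b = e q
    have hep := hΓ.2.2 p hp1 hp2
    have heq := hΓ.2.2 q hq1 hq2
    have he'p := hΓ'.2.2 p hp1 hp2
    have he'q := hΓ'.2.2 q hq1 hq2
    have he'peq : e' p = e q := h4
    have he'qeq : e' q = e p := h5
    have he'other : ∀ k, 1 ≤ k → k ≤ n → k ≠ p → k ≠ q → e' k = e k := by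
      intro k hk1 hk2 hkp hkq
      have := h6 ⟨n - k, by omega⟩
        (by intro hh; apply hkp; have := congrArg Fin.val hh; simp at this; omega)
        (by intro hh; apply hkq; have := congrArg Fin.val hh; simp at this; omega)
      simp only [wd] at this
      have hk : n - (n - k) = k := by omega
      rwa [hk] at this
    refine ⟨e p, e q, n + q, n + p, hword, by omega, by omega, hep.2.2, heq.2.2, ?_, ?_⟩
    · intro v w hv1 hv2 hvw
      obtain ⟨m, hm1, hm2, hmeq⟩ := (interw_mem hΓ _).mp hvw
      have hem := hΓ.2.2 m hm1 hm2
      have := sym2_eq_aux (by omega) hem.2.1 (by omega) hmeq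
      obtain ⟨hvm, hwm⟩ := this
      have := hcond ⟨n - m, by omega⟩ ?_ ?_
      · have hlt2 : n - m < (jb : ℕ) := this
        omega
      · simp only [wd]
        have hk : n - (n - m) = m := by omega
        rw [hk, ← hvm]
        exact hv1
      · simp only [wd]
        have hk : n - (n - m) = m := by omega
        rw [hk, ← hvm]
        exact hv2
    · ext f
      rw [interw_mem hΓ', Finset.mem_insert, Finset.mem_insert,
        Finset.mem_erase, Finset.mem_erase]
      constructor
      · rintro ⟨k, hk1, hk2, rfl⟩
        by_cases hkq : k = q
        · subst hkq
          left; rw [he'qeq]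
        by_cases hkp : k = p
        · subst hkp
          right; left; rw [he'peq]
        · right; right
          have hek := he'other k hk1 hk2 hkp hkq
          rw [hek]
          refine ⟨?_, ?_, (interw_mem hΓ _).mpr ⟨k, hk1, hk2, rfl⟩⟩
          · intro hh
            have := sym2_eq_aux (Or.inl (hΓ.2.2 k hk1 hk2).2.1) heq.2.1 (by omega) hh
            omega
          · intro hh
            have := sym2_eq_aux (Or.inl (hΓ.2.2 k hk1 hk2).2.1) hep.2.1 (by omega) hh
            omega
      · rintro (hf | hf | ⟨hne1, hne2, hf⟩)
        · exact ⟨q, hq1, hq2, by rw [hf, he'qeq]⟩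
        · exact ⟨p, hp1, hp2, by rw [hf, he'peq]⟩
        · obtain ⟨m, hm1, hm2, hmeq⟩ := (interw_mem hΓ _).mp hf
          have hmp : m ≠ p := by
            rintro rfl
            exact hne2 hmeq
          have hmq : m ≠ q := by
            rintro rfl
            exact hne1 hmeq
          exact ⟨m, hm1, hm2, by rw [hmeq, he'other m hm1 hm2 hmp hmq]⟩
end
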